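/- arXiv:quant-ph/0512206 — 6 statements merged into one kernel-verified Lean document; each statement's English description precedes it below -/
import Mathlib

section
/- Let 𝓗 be a complex Hilbert space, H a bounded self-adjoint operator on 𝓗, S a unitary operator on 𝓗, ℏ > 0, and u : ℝ → ℂ continuous. Set ρ(z) := exp((2/ℏ)∫_0^z Im u(r) dr) and Δ(t,s) := 1_t(s) − 1_0(s) ∈ {−1,0,1}, where 1_a is the indicator of (−∞,a). For t ∈ ℝ define (V^t χ)(z) := exp((i/ℏ)∫_0^z u(r)dr) · exp((i/ℏ)zH) · S^{Δ(t, z+t)} · exp(−(i/ℏ)(z+t)H) · exp(−(i/ℏ)∫_0^{z+t} u(r)dr) · χ(z+t). Then each V^t is a well-defined surjective linear isometry of the weighted space L²(ℝ, ρ(z)dz; 𝓗) onto itself, V^0 is the identity, and V^r ∘ V^t = V^{r+t} for all r, t ∈ ℝ. -/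
open MeasureTheory NormedSpace Complex
open scoped ENNReal NNReal

set_option maxHeartbeats 1000000
set_option synthInstance.maxHeartbeats 400000

section ToyAux

variable {𝓗 : Type*} [NormedAddCommGroup 𝓗] [InnerProductSpace ℂ 𝓗] [CompleteSpace 𝓗]
noncomputable instance toyRatAlg : NormedAlgebra ℚ (𝓗 →L[ℂ] 𝓗) :=
  NormedAlgebra.restrictScalars ℚ ℂ (𝓗 →L[ℂ] 𝓗)

variable (H : 𝓗 →L[ℂ] 𝓗) (S : unitary (𝓗 →L[ℂ] 𝓗)) (ℏ : ℝ) (u : ℝ → ℂ)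

noncomputable def phase (z : ℝ) : ℂ :=
  Complex.exp ((Complex.I / (ℏ : ℂ)) * ∫ r in (0:ℝ)..z, u r)

noncomputable def Uop (z : ℝ) : 𝓗 →L[ℂ] 𝓗 :=
  NormedSpace.exp (((Complex.I / (ℏ : ℂ)) * (z : ℂ)) • H)

noncomputable def del (t s : ℝ) : ℤ := (if s < t then 1 else 0) - (if s < 0 then 1 else 0)

noncomputable def Wop (t z : ℝ) : 𝓗 →L[ℂ] 𝓗 :=
  (phase ℏ u z * (phase ℏ u (z + t))⁻¹) •
    (Uop H ℏ z * (↑(S ^ del t (z + t)) : 𝓗 →L[ℂ] 𝓗) * Uop H ℏ (-(z + t)))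

lemma phase_ne_zero (z : ℝ) : phase ℏ u z ≠ 0 := Complex.exp_ne_zero _

lemma continuous_phase (hu : Continuous u) : Continuous (phase ℏ u) :=
  Complex.continuous_exp.comp (continuous_const.mul
    (intervalIntegral.continuous_primitive (fun a b => hu.intervalIntegrable a b) 0))

lemma im_integral (hu : Continuous u) (z : ℝ) :
    (∫ r in (0:ℝ)..z, u r).im = ∫ r in (0:ℝ)..z, (u r).im := by
  simpa using (Complex.imCLM.intervalIntegral_comp_comm (μ := volume)
    (hu.intervalIntegrable 0 z)).symm

noncomputable def wt (z : ℝ) : ℝ := Real.exp ((1 / ℏ) * ∫ r in (0:ℝ)..z, (u r).im)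

lemma wt_pos (z : ℝ) : 0 < wt ℏ u z := Real.exp_pos _

lemma wt_sq (z : ℝ) : wt ℏ u z ^ 2 = Real.exp ((2 / ℏ) * ∫ r in (0:ℝ)..z, (u r).im) := by
  rw [wt, sq, ← Real.exp_add]
  congr 1
  ring

lemma norm_phase (hu : Continuous u) (z : ℝ) : ‖phase ℏ u z‖ = (wt ℏ u z)⁻¹ := by
  rw [phase, Complex.norm_exp, wt, ← Real.exp_neg]
  congr 1
  have h1 : Complex.I / (ℏ : ℂ) * ∫ r in (0:ℝ)..z, u r
      = (Complex.I * ∫ r in (0:ℝ)..z, u r) / (ℏ : ℂ) := by ring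
  rw [h1, Complex.div_ofReal_re]
  have h2 : (Complex.I * ∫ r in (0:ℝ)..z, u r).re = -((∫ r in (0:ℝ)..z, u r).im) := by
    simp [Complex.mul_re]
  rw [h2, im_integral u hu z]
  ring

lemma norm_Uop_apply (hH : IsSelfAdjoint H) (z : ℝ) (x : 𝓗) : ‖Uop H ℏ z x‖ = ‖x‖ := by
  have hmem : ((Complex.I / (ℏ : ℂ)) * (z : ℂ)) • H ∈ skewAdjoint (𝓗 →L[ℂ] 𝓗) := by
    rw [skewAdjoint.mem_iff, star_smul, hH.star_eq, ← neg_smul]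
    congr 1
    simp only [RCLike.star_def, map_mul, map_div₀, Complex.conj_I, Complex.conj_ofReal]
    ring
  exact ContinuousLinearMap.norm_map_of_mem_unitary
    (exp_mem_unitary_of_mem_skewAdjoint hmem) x

lemma Uop_mul (a b : ℝ) : Uop H ℏ a * Uop H ℏ b = Uop H ℏ (a + b) := by
  rw [Uop, Uop, Uop, ← exp_add_of_commute (((Commute.refl H).smul_left _).smul_right _)]
  congr 1
  rw [← add_smul]
  congr 1
  push_cast
  ring

lemma Uop_zero : Uop H ℏ (0:ℝ) = 1 := by
  rw [Uop]
  norm_num [exp_zero]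

lemma del_add (r t z : ℝ) : del r (z + r) + del t (z + r + t) = del (r + t) (z + r + t) := by
  have h1 : (z + r < r) ↔ (z + r + t < r + t) := by constructor <;> intro h <;> linarith
  have h2 : (z + r + t < t) ↔ (z + r < 0) := by constructor <;> intro h <;> linarith
  simp only [del, h1, h2]
  exact sub_add_sub_cancel _ _ _

lemma Wop_mul (r t z : ℝ) :
    Wop H S ℏ u r z * Wop H S ℏ u t (z + r) = Wop H S ℏ u (r + t) z := by
  have hz : z + (r + t) = z + r + t := (add_assoc z r t).symm
  rw [Wop, Wop, Wop, smul_mul_smul_comm, hz]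
  congr 1
  · rw [mul_assoc (phase ℏ u z), ← mul_assoc (phase ℏ u (z + r))⁻¹,
      inv_mul_cancel₀ (phase_ne_zero ℏ u (z + r)), one_mul]
  · have hU : Uop H ℏ (-(z + r)) * Uop H ℏ (z + r) = 1 := by
      rw [Uop_mul, neg_add_cancel, Uop_zero]
    have hS : ((↑(S ^ del r (z + r)) : 𝓗 →L[ℂ] 𝓗) * ↑(S ^ del t (z + r + t)))
        = (↑(S ^ del (r + t) (z + r + t)) : 𝓗 →L[ℂ] 𝓗) := by
      rw [← Submonoid.coe_mul, ← zpow_add]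
      congr 2
      exact del_add r t z
    calc (Uop H ℏ z * ↑(S ^ del r (z + r)) * Uop H ℏ (-(z + r))) *
          (Uop H ℏ (z + r) * ↑(S ^ del t (z + r + t)) * Uop H ℏ (-(z + r + t)))
        = Uop H ℏ z * ↑(S ^ del r (z + r)) * (Uop H ℏ (-(z + r)) * Uop H ℏ (z + r)) *
            ↑(S ^ del t (z + r + t)) * Uop H ℏ (-(z + r + t)) := by
          simp only [mul_assoc]
      _ = Uop H ℏ z * (↑(S ^ del r (z + r)) * ↑(S ^ del t (z + r + t))) *
            Uop H ℏ (-(z + r + t)) := by rw [hU, mul_one]; simp only [mul_assoc]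
      _ = Uop H ℏ z * ↑(S ^ del (r + t) (z + r + t)) * Uop H ℏ (-(z + r + t)) := by rw [hS]

lemma Wop_zero (z : ℝ) : Wop H S ℏ u 0 z = 1 := by
  have h0 : del (0:ℝ) (z + 0) = 0 := by simp [del]
  rw [Wop, h0, add_zero, zpow_zero]
  rw [mul_inv_cancel₀ (phase_ne_zero ℏ u z), one_smul]
  have : ((↑(1 : unitary (𝓗 →L[ℂ] 𝓗))) : 𝓗 →L[ℂ] 𝓗) = 1 := rfl
  rw [this, mul_one, Uop_mul, add_neg_cancel, Uop_zero]

lemma norm_Wop_apply (hH : IsSelfAdjoint H) (hu : Continuous u) (t z : ℝ) (x : 𝓗) :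
    ‖Wop H S ℏ u t z x‖ = (wt ℏ u (z + t) * (wt ℏ u z)⁻¹) * ‖x‖ := by
  rw [Wop, ContinuousLinearMap.smul_apply, norm_smul, ContinuousLinearMap.mul_apply,
    ContinuousLinearMap.mul_apply, norm_Uop_apply H ℏ hH, Unitary.norm_map,
    norm_Uop_apply H ℏ hH, norm_mul, norm_inv, norm_phase ℏ u hu, norm_phase ℏ u hu, inv_inv]
  ring


section Meas

lemma lintegral_shift (F : ℝ → ℝ≥0∞) (t : ℝ) : ∫⁻ z, F (z + t) = ∫⁻ z, F z :=
  (measurePreserving_add_right volume t).lintegral_comp_emb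
    (MeasurableEquiv.addRight t).measurableEmbedding F

variable (ρ : ℝ → ℝ)

lemma rho_pos (hρ : ∀ z, ρ z = Real.exp ((2 / ℏ) * ∫ r in (0:ℝ)..z, (u r).im)) (z : ℝ) :
    0 < ρ z := by
  rw [hρ]; exact Real.exp_pos _

lemma continuous_rho (hu : Continuous u)
    (hρ : ∀ z, ρ z = Real.exp ((2 / ℏ) * ∫ r in (0:ℝ)..z, (u r).im)) : Continuous ρ := by
  have : ρ = fun z => Real.exp ((2 / ℏ) * ∫ r in (0:ℝ)..z, (u r).im) := funext hρ
  rw [this]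
  exact Real.continuous_exp.comp (continuous_const.mul
    (intervalIntegral.continuous_primitive
      (fun a b => ((Complex.continuous_im.comp hu)).intervalIntegrable a b) 0))

lemma meas_density (hu : Continuous u)
    (hρ : ∀ z, ρ z = Real.exp ((2 / ℏ) * ∫ r in (0:ℝ)..z, (u r).im)) :
    Measurable fun z => ENNReal.ofReal (ρ z) :=
  ENNReal.measurable_ofReal.comp (continuous_rho ℏ u ρ hu hρ).measurable

lemma vol_ac (hu : Continuous u)
    (hρ : ∀ z, ρ z = Real.exp ((2 / ℏ) * ∫ r in (0:ℝ)..z, (u r).im)) :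
    (volume : Measure ℝ) ≪ volume.withDensity fun z => ENNReal.ofReal (ρ z) := by
  have h := withDensity_inv_same (μ := (volume : Measure ℝ)) (meas_density ℏ u ρ hu hρ)
    (ae_of_all _ fun z => by
      simp only [ne_eq, ENNReal.ofReal_eq_zero, not_le]
      exact rho_pos ℏ u ρ hρ z)
    (ae_of_all _ fun z => ENNReal.ofReal_ne_top)
  calc (volume : Measure ℝ)
      = ((volume.withDensity fun z => ENNReal.ofReal (ρ z)).withDensity
          fun z => (ENNReal.ofReal (ρ z))⁻¹) := h.symm
    _ ≪ volume.withDensity fun z => ENNReal.ofReal (ρ z) := withDensity_absolutelyContinuous _ _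

lemma ae_shift (hu : Continuous u)
    (hρ : ∀ z, ρ z = Real.exp ((2 / ℏ) * ∫ r in (0:ℝ)..z, (u r).im))
    {α : Type*} {f g : ℝ → α} (t : ℝ)
    (h : f =ᵐ[volume.withDensity fun z => ENNReal.ofReal (ρ z)] g) :
    (fun z => f (z + t)) =ᵐ[volume.withDensity fun z => ENNReal.ofReal (ρ z)]
      (fun z => g (z + t)) := by
  have h1 : f =ᵐ[volume] g := (vol_ac ℏ u ρ hu hρ).ae_eq h
  have h2 := (measurePreserving_add_right volume t).quasiMeasurePreserving.ae_eq_comp h1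
  exact (withDensity_absolutelyContinuous _ _).ae_eq h2

lemma pointwise_key (hH : IsSelfAdjoint H) (hu : Continuous u)
    (hρ : ∀ z, ρ z = Real.exp ((2 / ℏ) * ∫ r in (0:ℝ)..z, (u r).im)) (t z : ℝ) (v : 𝓗) :
    ENNReal.ofReal (ρ z) * (‖Wop H S ℏ u t z v‖₊ : ℝ≥0∞) ^ (2:ℝ)
      = ENNReal.ofReal (ρ (z + t)) * (‖v‖₊ : ℝ≥0∞) ^ (2:ℝ) := by
  rw [← enorm_eq_nnnorm, ← enorm_eq_nnnorm, ← ofReal_norm, ← ofReal_norm,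
      ENNReal.ofReal_rpow_of_nonneg (norm_nonneg _) (by norm_num : (0:ℝ) ≤ 2),
      ENNReal.ofReal_rpow_of_nonneg (norm_nonneg _) (by norm_num : (0:ℝ) ≤ 2),
      ← ENNReal.ofReal_mul (le_of_lt (rho_pos ℏ u ρ hρ z)),
      ← ENNReal.ofReal_mul (le_of_lt (rho_pos ℏ u ρ hρ (z + t)))]
  congr 1
  rw [Real.rpow_two, Real.rpow_two, norm_Wop_apply H S ℏ u hH hu, hρ z, hρ (z + t),
    ← wt_sq, ← wt_sq]
  have hw := wt_pos ℏ u z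
  field_simp

lemma eLpNorm_Wop (hH : IsSelfAdjoint H) (hu : Continuous u)
    (hρ : ∀ z, ρ z = Real.exp ((2 / ℏ) * ∫ r in (0:ℝ)..z, (u r).im)) (t : ℝ) (f : ℝ → 𝓗) :
    eLpNorm (fun z => Wop H S ℏ u t z (f (z + t))) 2
        (volume.withDensity fun z => ENNReal.ofReal (ρ z))
      = eLpNorm f 2 (volume.withDensity fun z => ENNReal.ofReal (ρ z)) := by
  have hd := meas_density ℏ u ρ hu hρ
  have hfin : ∀ᵐ z ∂(volume : Measure ℝ), ENNReal.ofReal (ρ z) < ∞ :=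
    ae_of_all _ fun z => ENNReal.ofReal_lt_top
  rw [eLpNorm_eq_lintegral_rpow_enorm_toReal two_ne_zero ENNReal.ofNat_ne_top,
    eLpNorm_eq_lintegral_rpow_enorm_toReal two_ne_zero ENNReal.ofNat_ne_top,
    lintegral_withDensity_eq_lintegral_mul_non_measurable _ hd hfin,
    lintegral_withDensity_eq_lintegral_mul_non_measurable _ hd hfin]
  congr 1
  simp only [Pi.mul_apply, ENNReal.toReal_ofNat]
  refine Eq.trans (lintegral_congr fun z =>
    pointwise_key H S ℏ u ρ hH hu hρ t z (f (z + t))) ?_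
  exact lintegral_shift (fun y => ENNReal.ofReal (ρ y) * (‖f y‖₊ : ℝ≥0∞) ^ (2:ℝ)) t

lemma sm_S_pow (t : ℝ) :
    StronglyMeasurable (fun z : ℝ => (↑(S ^ del t (z + t)) : 𝓗 →L[ℂ] 𝓗)) := by
  have hdel : ∀ z : ℝ, del t (z + t)
      = (if z < 0 then 1 else 0) - (if z < -t then 1 else 0) := by
    intro z
    have c1 : z + t < t ↔ z < 0 := by constructor <;> intro h <;> linarith
    have c2 : z + t < 0 ↔ z < -t := by constructor <;> intro h <;> linarith
    simp only [del, c1, c2]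
  have heq : (fun z : ℝ => (↑(S ^ del t (z + t)) : 𝓗 →L[ℂ] 𝓗))
      = fun z : ℝ => if z < 0 then
          (if z < -t then (↑(S ^ (0:ℤ)) : 𝓗 →L[ℂ] 𝓗) else ↑(S ^ (1:ℤ)))
        else (if z < -t then (↑(S ^ (-1:ℤ)) : 𝓗 →L[ℂ] 𝓗) else ↑(S ^ (0:ℤ))) := by
    funext z
    rw [hdel z]
    split_ifs <;> congr 1
  rw [heq]
  have h0 : MeasurableSet {z : ℝ | z < 0} := measurableSet_Iio
  have ht : MeasurableSet {z : ℝ | z < -t} := measurableSet_Iio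
  exact StronglyMeasurable.ite h0
    (StronglyMeasurable.ite ht stronglyMeasurable_const stronglyMeasurable_const)
    (StronglyMeasurable.ite ht stronglyMeasurable_const stronglyMeasurable_const)

lemma sm_Wop (hu : Continuous u) (t : ℝ) :
    StronglyMeasurable (fun z : ℝ => Wop H S ℏ u t z) := by
  have h1 : Continuous (fun z : ℝ => phase ℏ u z * (phase ℏ u (z + t))⁻¹) :=
    (continuous_phase ℏ u hu).mul (Continuous.inv₀
      ((continuous_phase ℏ u hu).comp (continuous_id.add continuous_const))
      (fun z => phase_ne_zero ℏ u (z + t)))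
  have h2 : Continuous (fun z : ℝ => Uop H ℏ z) :=
    exp_continuous.comp ((continuous_const.mul Complex.continuous_ofReal).smul
      continuous_const)
  have h3 : Continuous (fun z : ℝ => Uop H ℏ (-(z + t))) :=
    h2.comp ((continuous_id.add continuous_const).neg)
  exact h1.stronglyMeasurable.smul
    ((h2.stronglyMeasurable.mul (sm_S_pow S t)).mul h3.stronglyMeasurable)

lemma aesm_Wop (hu : Continuous u)
    (hρ : ∀ z, ρ z = Real.exp ((2 / ℏ) * ∫ r in (0:ℝ)..z, (u r).im)) (t : ℝ)
    {f : ℝ → 𝓗}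
    (hf : AEStronglyMeasurable f (volume.withDensity fun z => ENNReal.ofReal (ρ z))) :
    AEStronglyMeasurable (fun z => Wop H S ℏ u t z (f (z + t)))
      (volume.withDensity fun z => ENNReal.ofReal (ρ z)) := by
  have hf' : AEStronglyMeasurable f volume := hf.mono_ac (vol_ac ℏ u ρ hu hρ)
  set g := hf'.mk f with hg
  have hgsm : StronglyMeasurable g := hf'.stronglyMeasurable_mk
  have hfg : f =ᵐ[volume] g := hf'.ae_eq_mk
  have hshift : (fun z => f (z + t)) =ᵐ[volume] (fun z => g (z + t)) :=
    (measurePreserving_add_right volume t).quasiMeasurePreserving.ae_eq_comp hfg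
  have hgsm' : StronglyMeasurable (fun z => g (z + t)) :=
    hgsm.comp_measurable (measurable_add_const t)
  have happ : AEStronglyMeasurable (fun z => Wop H S ℏ u t z (g (z + t))) volume := by
    have := (ContinuousLinearMap.apply ℂ 𝓗).flip.aestronglyMeasurable_comp₂
      ((sm_Wop H S ℏ u hu t).aestronglyMeasurable (μ := volume))
      (hgsm'.aestronglyMeasurable (μ := volume))
    simpa only [ContinuousLinearMap.flip_apply, ContinuousLinearMap.apply_apply] using this
  have hcongr : (fun z => Wop H S ℏ u t z (f (z + t)))
      =ᵐ[volume] (fun z => Wop H S ℏ u t z (g (z + t))) := by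
    filter_upwards [hshift] with z hz
    rw [hz]
  exact ((happ.congr hcongr.symm)).mono_ac (withDensity_absolutelyContinuous _ _)

lemma memLp_Wop (hH : IsSelfAdjoint H) (hu : Continuous u)
    (hρ : ∀ z, ρ z = Real.exp ((2 / ℏ) * ∫ r in (0:ℝ)..z, (u r).im)) (t : ℝ)
    {f : ℝ → 𝓗}
    (hf : AEStronglyMeasurable f (volume.withDensity fun z => ENNReal.ofReal (ρ z)))
    (hfin : eLpNorm f 2 (volume.withDensity fun z => ENNReal.ofReal (ρ z)) < ∞) :
    MemLp (fun z => Wop H S ℏ u t z (f (z + t))) 2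
      (volume.withDensity fun z => ENNReal.ofReal (ρ z)) :=
  ⟨aesm_Wop H S ℏ u ρ hu hρ t hf, by
    rw [eLpNorm_Wop H S ℏ u ρ hH hu hρ t f]; exact hfin⟩

variable (hH : IsSelfAdjoint H) (hu : Continuous u)
  (hρ : ∀ z, ρ z = Real.exp ((2 / ℏ) * ∫ r in (0:ℝ)..z, (u r).im))

noncomputable def Vfun (t : ℝ)
    (χ : Lp 𝓗 2 (volume.withDensity fun z => ENNReal.ofReal (ρ z))) :
    Lp 𝓗 2 (volume.withDensity fun z => ENNReal.ofReal (ρ z)) :=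
  MemLp.toLp _
    (memLp_Wop H S ℏ u ρ hH hu hρ t (Lp.aestronglyMeasurable χ) (Lp.eLpNorm_lt_top χ))

lemma Vfun_coe (t : ℝ) (χ : Lp 𝓗 2 (volume.withDensity fun z => ENNReal.ofReal (ρ z))) :
    Vfun H S ℏ u ρ hH hu hρ t χ
      =ᵐ[volume.withDensity fun z => ENNReal.ofReal (ρ z)]
        fun z => Wop H S ℏ u t z (χ (z + t)) :=
  MemLp.coeFn_toLp _

lemma Vfun_add (t : ℝ) (χ ψ : Lp 𝓗 2 (volume.withDensity fun z => ENNReal.ofReal (ρ z))) :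
    Vfun H S ℏ u ρ hH hu hρ t (χ + ψ)
      = Vfun H S ℏ u ρ hH hu hρ t χ + Vfun H S ℏ u ρ hH hu hρ t ψ := by
  apply Lp.ext
  have h1 := Vfun_coe H S ℏ u ρ hH hu hρ t (χ + ψ)
  have h2 := Vfun_coe H S ℏ u ρ hH hu hρ t χ
  have h3 := Vfun_coe H S ℏ u ρ hH hu hρ t ψ
  have h4 := Lp.coeFn_add (Vfun H S ℏ u ρ hH hu hρ t χ) (Vfun H S ℏ u ρ hH hu hρ t ψ)
  have h6 := ae_shift ℏ u ρ hu hρ t (Lp.coeFn_add χ ψ)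
  filter_upwards [h1, h2, h3, h4, h6] with z hz1 hz2 hz3 hz4 hz6
  rw [hz1, hz4, Pi.add_apply, hz2, hz3, hz6, Pi.add_apply, map_add]

lemma Vfun_smul (t : ℝ) (c : ℂ)
    (χ : Lp 𝓗 2 (volume.withDensity fun z => ENNReal.ofReal (ρ z))) :
    Vfun H S ℏ u ρ hH hu hρ t (c • χ) = c • Vfun H S ℏ u ρ hH hu hρ t χ := by
  apply Lp.ext
  have h1 := Vfun_coe H S ℏ u ρ hH hu hρ t (c • χ)
  have h2 := Vfun_coe H S ℏ u ρ hH hu hρ t χ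
  have h4 := Lp.coeFn_smul c (Vfun H S ℏ u ρ hH hu hρ t χ)
  have h6 := ae_shift ℏ u ρ hu hρ t (Lp.coeFn_smul c χ)
  filter_upwards [h1, h2, h4, h6] with z hz1 hz2 hz4 hz6
  rw [hz1, hz4, Pi.smul_apply, hz2, hz6, Pi.smul_apply]
  exact _root_.map_smul (Wop H S ℏ u t z) c _

lemma Vfun_norm (t : ℝ)
    (χ : Lp 𝓗 2 (volume.withDensity fun z => ENNReal.ofReal (ρ z))) :
    ‖Vfun H S ℏ u ρ hH hu hρ t χ‖ = ‖χ‖ := by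
  rw [Lp.norm_def, Lp.norm_def]
  congr 1
  rw [eLpNorm_congr_ae (Vfun_coe H S ℏ u ρ hH hu hρ t χ)]
  exact eLpNorm_Wop H S ℏ u ρ hH hu hρ t _

lemma Vfun_zero (χ : Lp 𝓗 2 (volume.withDensity fun z => ENNReal.ofReal (ρ z))) :
    Vfun H S ℏ u ρ hH hu hρ 0 χ = χ := by
  apply Lp.ext
  refine (Vfun_coe H S ℏ u ρ hH hu hρ 0 χ).trans ?_
  refine Filter.Eventually.of_forall fun z => ?_
  show Wop H S ℏ u 0 z (χ (z + 0)) = χ z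
  rw [Wop_zero, add_zero, ContinuousLinearMap.one_apply]

lemma Vfun_comp (r t : ℝ)
    (χ : Lp 𝓗 2 (volume.withDensity fun z => ENNReal.ofReal (ρ z))) :
    Vfun H S ℏ u ρ hH hu hρ r (Vfun H S ℏ u ρ hH hu hρ t χ)
      = Vfun H S ℏ u ρ hH hu hρ (r + t) χ := by
  apply Lp.ext
  have h1 := Vfun_coe H S ℏ u ρ hH hu hρ r (Vfun H S ℏ u ρ hH hu hρ t χ)
  have h2 := ae_shift ℏ u ρ hu hρ r (Vfun_coe H S ℏ u ρ hH hu hρ t χ)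
  have h3 := Vfun_coe H S ℏ u ρ hH hu hρ (r + t) χ
  filter_upwards [h1, h2, h3] with z hz1 hz2 hz3
  rw [hz1, hz2, hz3, ← ContinuousLinearMap.mul_apply, Wop_mul, add_assoc]

noncomputable def Vequiv (t : ℝ) :
    Lp 𝓗 2 (volume.withDensity fun z => ENNReal.ofReal (ρ z))
      ≃ₗᵢ[ℂ] Lp 𝓗 2 (volume.withDensity fun z => ENNReal.ofReal (ρ z)) :=
  { toFun := Vfun H S ℏ u ρ hH hu hρ t
    map_add' := Vfun_add H S ℏ u ρ hH hu hρ t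
    map_smul' := Vfun_smul H S ℏ u ρ hH hu hρ t
    invFun := Vfun H S ℏ u ρ hH hu hρ (-t)
    left_inv := fun χ => by
      have h := Vfun_comp H S ℏ u ρ hH hu hρ (-t) t χ
      rw [neg_add_cancel, Vfun_zero] at h
      exact h
    right_inv := fun χ => by
      have h := Vfun_comp H S ℏ u ρ hH hu hρ t (-t) χ
      rw [add_neg_cancel, Vfun_zero] at h
      exact h
    norm_map' := Vfun_norm H S ℏ u ρ hH hu hρ t }

lemma Wop_apply_formula (t z : ℝ) (v : 𝓗) :
    Wop H S ℏ u t z v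
      = Complex.exp ((Complex.I / (ℏ : ℂ)) * ∫ r in (0:ℝ)..z, u r) •
        (NormedSpace.exp (((Complex.I / (ℏ : ℂ)) * (z : ℂ)) • H))
          ((↑(S ^ del t (z + t)) : 𝓗 →L[ℂ] 𝓗)
            ((NormedSpace.exp ((-((Complex.I / (ℏ : ℂ)) * ((z : ℂ) + (t : ℂ)))) • H))
              (Complex.exp (-((Complex.I / (ℏ : ℂ)) * ∫ r in (0:ℝ)..(z + t), u r)) • v))) := by
  have hexp : NormedSpace.exp ((-((Complex.I / (ℏ:ℂ)) * ((z:ℂ) + (t:ℂ)))) • H) = Uop H ℏ (-(z+t)) := by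
    rw [Uop]
    congr 2
    push_cast
    ring
  have hph : Complex.exp (-((Complex.I / (ℏ:ℂ)) * ∫ r in (0:ℝ)..(z+t), u r))
      = (phase ℏ u (z+t))⁻¹ := by
    rw [phase, ← Complex.exp_neg]
  rw [hexp, hph, Wop]
  simp only [ContinuousLinearMap.smul_apply, ContinuousLinearMap.mul_apply, _root_.map_smul,
    smul_smul]
  rfl

end Meas

end ToyAux




open MeasureTheory

/-- The resolving family `V^t` of the toy Schrödinger boundary value problem
`iℏ∂_tχ = (u + iℏ∂_z + H)χ`, `χ(0_−) = Sχ(0)`, given explicitly by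
`(V^t χ)(z) = e^{(i/ℏ)∫_0^z u} e^{(i/ℏ)zH} S^{Δ(t,z+t)} e^{−(i/ℏ)(z+t)H}
e^{−(i/ℏ)∫_0^{z+t} u} χ(z+t)`, is a one-parameter group of surjective linear
isometries of the weighted space `L²(ℝ, ρ(z)dz; 𝓗)` with `V^0 = I`. -/
theorem toy_model_unitary_group {𝓗 : Type*} [NormedAddCommGroup 𝓗]
    [InnerProductSpace ℂ 𝓗] [CompleteSpace 𝓗]
    (H : 𝓗 →L[ℂ] 𝓗) (hH : IsSelfAdjoint H)
    (S : unitary (𝓗 →L[ℂ] 𝓗))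
    (ℏ : ℝ) (hℏ : 0 < ℏ)
    (u : ℝ → ℂ) (hu : Continuous u)
    (ρ : ℝ → ℝ) (hρ : ∀ z, ρ z = Real.exp ((2 / ℏ) * ∫ r in (0:ℝ)..z, (u r).im))
    (μ : Measure ℝ)
    (hμ : μ = volume.withDensity fun z => ENNReal.ofReal (ρ z))
    (Δ : ℝ → ℝ → ℤ)
    (hΔ : ∀ t s, Δ t s = (if s < t then 1 else 0) - (if s < 0 then 1 else 0)) :
    ∃ V : ℝ → (Lp 𝓗 2 μ ≃ₗᵢ[ℂ] Lp 𝓗 2 μ),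
      (∀ t : ℝ, ∀ χ : Lp 𝓗 2 μ, ∀ᵐ z ∂μ,
        (V t χ : ℝ → 𝓗) z
          = Complex.exp ((Complex.I / (ℏ : ℂ)) * ∫ r in (0:ℝ)..z, u r) •
            (NormedSpace.exp (((Complex.I / (ℏ : ℂ)) * (z : ℂ)) • H))
              ((↑(S ^ (Δ t (z + t))) : 𝓗 →L[ℂ] 𝓗)
                ((NormedSpace.exp ((-((Complex.I / (ℏ : ℂ)) * ((z : ℂ) + (t : ℂ)))) • H))
                  (Complex.exp (-((Complex.I / (ℏ : ℂ)) * ∫ r in (0:ℝ)..(z + t), u r)) •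
                    (χ : ℝ → 𝓗) (z + t)))))
      ∧ V 0 = LinearIsometryEquiv.refl ℂ (Lp 𝓗 2 μ)
      ∧ ∀ r t : ℝ, ∀ χ : Lp 𝓗 2 μ, V r (V t χ) = V (r + t) χ := by
  subst hμ
  refine ⟨fun t => Vequiv H S ℏ u ρ hH hu hρ t, ?_, ?_, ?_⟩
  · intro t χ
    filter_upwards [Vfun_coe H S ℏ u ρ hH hu hρ t χ] with z hz
    have hd : Δ t (z + t) = del t (z + t) := by rw [hΔ t (z + t)]; rfl
    rw [hd]
    exact hz.trans (Wop_apply_formula H S ℏ u t z (χ (z + t)))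
  · exact LinearIsometryEquiv.ext fun χ => Vfun_zero H S ℏ u ρ hH hu hρ χ
  · intro r t χ
    exact Vfun_comp H S ℏ u ρ hH hu hρ r t χ
end

section
/- Let 𝓗 be a complex Hilbert space, H a bounded self-adjoint operator on 𝓗, ℏ > 0, u : ℝ → ℂ continuous, and ρ(z) := exp((2/ℏ)∫_0^z Im u(r) dr). The dressing map W defined by (Wη)(z) := exp((i/ℏ)∫_0^z u(r)dr) · exp((i/ℏ)zH) · η(z) is a surjective linear isometry from L²(ℝ; 𝓗) (with Lebesgue measure) onto the weighted space L²(ℝ, ρ(z)dz; 𝓗). -/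
open MeasureTheory
open scoped ENNReal NNReal

set_option maxHeartbeats 1000000
set_option synthInstance.maxHeartbeats 200000

section Aux

variable {𝓗 : Type*} [NormedAddCommGroup 𝓗] [NormedSpace ℂ 𝓗] [CompleteSpace 𝓗]

private theorem dressing_aux_meas {ν : Measure ℝ} (V : ℝ → (𝓗 →L[ℂ] 𝓗)) (hV : Continuous V)
    {f : ℝ → 𝓗} (hf : AEStronglyMeasurable f ν) :
    AEStronglyMeasurable (fun z => V z (f z)) ν :=
  isBoundedBilinearMap_apply.continuous.comp_aestronglyMeasurable
    (hV.aestronglyMeasurable.prodMk hf)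

/-- Abstract construction: a pointwise family of invertible operators whose norms exactly
compensate the density `ρ` induces a linear isometry equivalence between `L²(volume)` and
`L²(volume.withDensity ρ)`. -/
private theorem dressing_aux
    (T S : ℝ → (𝓗 →L[ℂ] 𝓗)) (hT : Continuous T) (hS : Continuous S)
    (ρ : ℝ → ℝ) (hρc : Continuous ρ) (hρpos : ∀ z, 0 < ρ z)
    (hST : ∀ z (x : 𝓗), S z (T z x) = x) (hTS : ∀ z (x : 𝓗), T z (S z x) = x)
    (hptT : ∀ z (x : 𝓗),
      ENNReal.ofReal (ρ z) * (‖T z x‖₊ : ℝ≥0∞) ^ (2:ℝ) = (‖x‖₊ : ℝ≥0∞) ^ (2:ℝ))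
    (hptS : ∀ z (x : 𝓗),
      (‖S z x‖₊ : ℝ≥0∞) ^ (2:ℝ) = ENNReal.ofReal (ρ z) * (‖x‖₊ : ℝ≥0∞) ^ (2:ℝ)) :
    ∃ W : Lp 𝓗 2 (volume : Measure ℝ) ≃ₗᵢ[ℂ]
        Lp 𝓗 2 (volume.withDensity fun z => ENNReal.ofReal (ρ z)),
      ∀ η : Lp 𝓗 2 (volume : Measure ℝ),
        (W η : ℝ → 𝓗) =ᵐ[volume] fun z => T z ((η : ℝ → 𝓗) z) := by
  set κ : ℝ → ℝ≥0∞ := fun z => ENNReal.ofReal (ρ z) with hκdef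
  set m : Measure ℝ := volume.withDensity κ with hm
  have hκm : AEMeasurable κ volume :=
    (ENNReal.continuous_ofReal.comp hρc).measurable.aemeasurable
  have μac : m ≪ volume := withDensity_absolutelyContinuous _ _
  have volac : (volume : Measure ℝ) ≪ m :=
    withDensity_absolutelyContinuous' hκm
      (Filter.Eventually.of_forall fun z => (ENNReal.ofReal_pos.mpr (hρpos z)).ne')
  -- the two key `eLpNorm` identities
  have hexp : ((2 : ℝ≥0∞)).toReal = (2 : ℝ) := by norm_num
  have keyT : ∀ f : ℝ → 𝓗, AEStronglyMeasurable f volume →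
      eLpNorm (fun z => T z (f z)) 2 m = eLpNorm f 2 volume := by
    intro f hf
    rw [eLpNorm_eq_lintegral_rpow_enorm_toReal two_ne_zero ENNReal.ofNat_ne_top,
      eLpNorm_eq_lintegral_rpow_enorm_toReal two_ne_zero ENNReal.ofNat_ne_top, hexp]
    congr 1
    have hg : AEMeasurable (fun z => ‖T z (f z)‖ₑ ^ (2:ℝ)) volume :=
      (dressing_aux_meas T hT hf).enorm.pow_const _
    rw [hm, lintegral_withDensity_eq_lintegral_mul₀ hκm hg]
    refine lintegral_congr fun z => ?_
    simpa [hκdef, ← enorm_eq_nnnorm] using hptT z (f z)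
  have keyS : ∀ g : ℝ → 𝓗, AEStronglyMeasurable g m →
      eLpNorm (fun z => S z (g z)) 2 volume = eLpNorm g 2 m := by
    intro g hg
    have hgv : AEStronglyMeasurable g volume := hg.mono_ac volac
    rw [eLpNorm_eq_lintegral_rpow_enorm_toReal two_ne_zero ENNReal.ofNat_ne_top,
      eLpNorm_eq_lintegral_rpow_enorm_toReal two_ne_zero ENNReal.ofNat_ne_top, hexp]
    congr 1
    have hgm : AEMeasurable (fun z => ‖g z‖ₑ ^ (2:ℝ)) volume :=
      hgv.enorm.pow_const _
    rw [hm, lintegral_withDensity_eq_lintegral_mul₀ hκm hgm]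
    refine lintegral_congr fun z => ?_
    simpa [hκdef, ← enorm_eq_nnnorm] using hptS z (g z)
  -- membership
  have memT : ∀ η : Lp 𝓗 2 (volume : Measure ℝ),
      MemLp (fun z => T z ((η : ℝ → 𝓗) z)) 2 m := fun η =>
    ⟨(dressing_aux_meas T hT (Lp.aestronglyMeasurable η)).mono_ac μac, by
      rw [keyT _ (Lp.aestronglyMeasurable η)]; exact (Lp.memLp η).2⟩
  have memS : ∀ ξ : Lp 𝓗 2 m,
      MemLp (fun z => S z ((ξ : ℝ → 𝓗) z)) 2 (volume : Measure ℝ) := fun ξ =>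
    ⟨dressing_aux_meas S hS ((Lp.aestronglyMeasurable ξ).mono_ac volac), by
      rw [keyS _ (Lp.aestronglyMeasurable ξ)]; exact (Lp.memLp ξ).2⟩
  -- the underlying maps
  set Wf : Lp 𝓗 2 (volume : Measure ℝ) → Lp 𝓗 2 m :=
    fun η => (memT η).toLp _ with hWf
  set Wb : Lp 𝓗 2 m → Lp 𝓗 2 (volume : Measure ℝ) :=
    fun ξ => (memS ξ).toLp _ with hWb
  have hWfae : ∀ η, (Wf η : ℝ → 𝓗) =ᵐ[m] fun z => T z ((η : ℝ → 𝓗) z) := fun η =>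
    MemLp.coeFn_toLp _
  have hWbae : ∀ ξ, (Wb ξ : ℝ → 𝓗) =ᵐ[volume] fun z => S z ((ξ : ℝ → 𝓗) z) := fun ξ =>
    MemLp.coeFn_toLp _
  have hadd : ∀ η η', Wf (η + η') = Wf η + Wf η' := by
    intro η η'
    apply Lp.ext
    filter_upwards [hWfae (η + η'), Lp.coeFn_add (Wf η) (Wf η'),
      hWfae η, hWfae η', μac.ae_le (Lp.coeFn_add η η')]
      with z h1 h2 h3 h4 h5
    rw [h1, h2, Pi.add_apply, h3, h4, h5, Pi.add_apply, map_add]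
  have hsmul : ∀ (a : ℂ) η, Wf (a • η) = a • Wf η := by
    intro a η
    apply Lp.ext
    filter_upwards [hWfae (a • η), Lp.coeFn_smul a (Wf η),
      hWfae η, μac.ae_le (Lp.coeFn_smul a η)] with z h1 h2 h3 h4
    rw [h1, h2, Pi.smul_apply, h3, h4, Pi.smul_apply, _root_.map_smul]
  have hleft : Function.LeftInverse Wb Wf := by
    intro η
    apply Lp.ext
    filter_upwards [hWbae (Wf η), volac.ae_le (hWfae η)] with z h1 h2
    rw [h1, h2, hST]
  have hright : Function.RightInverse Wb Wf := by
    intro ξ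
    apply Lp.ext
    filter_upwards [hWfae (Wb ξ), μac.ae_le (hWbae ξ)] with z h1 h2
    rw [h1, h2, hTS]
  have hnorm : ∀ η, ‖Wf η‖ = ‖η‖ := by
    intro η
    rw [Lp.norm_def, Lp.norm_def]
    congr 1
    rw [eLpNorm_congr_ae (hWfae η), keyT _ (Lp.aestronglyMeasurable η)]
  refine ⟨⟨⟨⟨⟨Wf, hadd⟩, hsmul⟩, Wb, hleft, hright⟩, fun η => hnorm η⟩, ?_⟩
  intro η
  exact (hWfae η).filter_mono volac.ae_le

end Aux

/-- The **dressing map** `(Wη)(z) = e^{(i/ℏ)∫_0^z u(r)dr} e^{(i/ℏ)zH} η(z)` is a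
surjective linear isometry from `L²(ℝ; 𝓗)` (Lebesgue measure) onto the weighted
space `L²(ℝ, ρ(z)dz; 𝓗)`, where `ρ(z) = exp((2/ℏ)∫_0^z Im u(r) dr)`. -/
theorem dressing_map_isometry {𝓗 : Type*} [NormedAddCommGroup 𝓗]
    [InnerProductSpace ℂ 𝓗] [CompleteSpace 𝓗]
    (H : 𝓗 →L[ℂ] 𝓗) (hH : IsSelfAdjoint H)
    (ℏ : ℝ) (hℏ : 0 < ℏ)
    (u : ℝ → ℂ) (hu : Continuous u)
    (ρ : ℝ → ℝ) (hρ : ∀ z, ρ z = Real.exp ((2 / ℏ) * ∫ r in (0:ℝ)..z, (u r).im))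
    (μ : Measure ℝ)
    (hμ : μ = volume.withDensity fun z => ENNReal.ofReal (ρ z)) :
    ∃ W : Lp 𝓗 2 (volume : Measure ℝ) ≃ₗᵢ[ℂ] Lp 𝓗 2 μ,
      ∀ η : Lp 𝓗 2 (volume : Measure ℝ), ∀ᵐ z : ℝ,
        (W η : ℝ → 𝓗) z
          = Complex.exp ((Complex.I / (ℏ : ℂ)) * ∫ r in (0:ℝ)..z, u r) •
            (NormedSpace.exp (((Complex.I / (ℏ : ℂ)) * (z : ℂ)) • H))
              ((η : ℝ → 𝓗) z) := by
  subst hμ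
  let +nondep : NormedAlgebra ℚ (𝓗 →L[ℂ] 𝓗) := .restrictScalars ℚ ℂ _
  -- the scalar factor
  set c : ℝ → ℂ := fun z => Complex.exp ((Complex.I / (ℏ : ℂ)) * ∫ r in (0:ℝ)..z, u r)
    with hcdef
  -- the unitary factor
  set U : ℝ → (𝓗 →L[ℂ] 𝓗) :=
    fun z => NormedSpace.exp (((Complex.I / (ℏ : ℂ)) * (z : ℂ)) • H) with hUdef
  have hℏ0 : (ℏ : ℝ) ≠ 0 := hℏ.ne'
  have hint : Continuous fun z : ℝ => ∫ r in (0:ℝ)..z, u r :=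
    intervalIntegral.continuous_primitive (fun a b => hu.intervalIntegrable a b) 0
  have hintim : Continuous fun z : ℝ => ∫ r in (0:ℝ)..z, (u r).im :=
    intervalIntegral.continuous_primitive
      (fun a b => (Complex.continuous_im.comp hu).intervalIntegrable a b) 0
  have hρc : Continuous ρ := by
    have : ρ = fun z => Real.exp ((2 / ℏ) * ∫ r in (0:ℝ)..z, (u r).im) := funext hρ
    rw [this]
    exact Real.continuous_exp.comp (continuous_const.mul hintim)
  have hρpos : ∀ z, 0 < ρ z := fun z => by rw [hρ]; exact Real.exp_pos _
  have hc : Continuous c := Complex.continuous_exp.comp (continuous_const.mul hint)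
  have hc0 : ∀ z, c z ≠ 0 := fun z => Complex.exp_ne_zero _
  have hUc : Continuous U :=
    NormedSpace.exp_continuous.comp
      (((continuous_const.mul Complex.continuous_ofReal)).smul continuous_const)
  -- `U z` is isometric
  have hUiso : ∀ z (x : 𝓗), ‖U z x‖ = ‖x‖ := by
    intro z x
    have hr : IsSelfAdjoint (((z / ℏ : ℝ) : ℂ)) := Complex.conj_ofReal _
    have hB : IsSelfAdjoint (((z / ℏ : ℝ) : ℂ) • H) := hr.smul hH
    have hA : ((Complex.I / (ℏ:ℂ)) * (z:ℂ)) • H = Complex.I • (((z / ℏ : ℝ) : ℂ) • H) := by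
      rw [smul_smul]
      congr 1
      push_cast
      ring
    rw [hUdef]
    simp only
    rw [hA]
    exact ContinuousLinearMap.norm_map_of_mem_unitary
      (NormedSpace.exp_mem_unitary_of_mem_skewAdjoint
        (hB.smul_mem_skewAdjoint Complex.conj_I)) x
  -- `U (-z)` inverts `U z`
  have hAneg : ∀ z : ℝ, ((Complex.I / (ℏ:ℂ)) * ((-z : ℝ) : ℂ)) • H
      = -(((Complex.I / (ℏ:ℂ)) * (z:ℂ)) • H) := by
    intro z
    rw [← neg_smul]
    congr 1
    push_cast
    ring
  have hUmul : ∀ z : ℝ, U z * U (-z) = 1 := by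
    intro z
    rw [hUdef]
    simp only
    rw [hAneg z, ← NormedSpace.exp_add_of_commute (Commute.refl _).neg_right,
      add_neg_cancel, NormedSpace.exp_zero]
  have hU2 : ∀ z (x : 𝓗), U (-z) (U z x) = x := by
    intro z x
    have h := hUmul (-z)
    rw [neg_neg] at h
    rw [← ContinuousLinearMap.mul_apply, h, ContinuousLinearMap.one_apply]
  have hU2' : ∀ z (x : 𝓗), U z (U (-z) x) = x := by
    intro z x
    rw [← ContinuousLinearMap.mul_apply, hUmul z, ContinuousLinearMap.one_apply]
  -- norm of the scalar factor
  have hcnorm : ∀ z, ρ z * (‖c z‖ * ‖c z‖) = 1 := by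
    intro z
    have him : (∫ r in (0:ℝ)..z, u r).im = ∫ r in (0:ℝ)..z, (u r).im := by
      have h := ContinuousLinearMap.intervalIntegral_comp_comm Complex.imCLM
        (hu.intervalIntegrable (μ := volume) 0 z)
      simpa using h.symm
    have habs : ‖c z‖ = Real.exp (-(1/ℏ) * ∫ r in (0:ℝ)..z, (u r).im) := by
      rw [hcdef]
      simp only
      rw [Complex.norm_exp]
      congr 1
      rw [Complex.mul_re]
      simp [Complex.div_re, him]
    rw [habs, hρ, ← Real.exp_add, ← Real.exp_add, ← Real.exp_zero]
    congr 1
    simp only [Real.exp_zero]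
    field_simp
    ring
  -- assemble the pointwise operator family
  set T : ℝ → (𝓗 →L[ℂ] 𝓗) := fun z => c z • U z with hTdef
  set S : ℝ → (𝓗 →L[ℂ] 𝓗) := fun z => (c z)⁻¹ • U (-z) with hSdef
  have hTc : Continuous T := hc.smul hUc
  have hSc : Continuous S := (hc.inv₀ hc0).smul (hUc.comp continuous_neg)
  have hST : ∀ z (x : 𝓗), S z (T z x) = x := by
    intro z x
    rw [hTdef, hSdef]
    simp only [ContinuousLinearMap.smul_apply, _root_.map_smul, smul_smul,
      inv_mul_cancel₀ (hc0 z), mul_inv_cancel₀ (hc0 z), one_smul, hU2 z x]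
  have hTS : ∀ z (x : 𝓗), T z (S z x) = x := by
    intro z x
    rw [hTdef, hSdef]
    simp only [ContinuousLinearMap.smul_apply, _root_.map_smul, smul_smul,
      inv_mul_cancel₀ (hc0 z), mul_inv_cancel₀ (hc0 z), one_smul, hU2' z x]
  -- pointwise norm identities
  have hsq : ∀ t : ℝ, 0 ≤ t → t ^ (2:ℝ) = t * t := by
    intro t ht
    rw [show (2:ℝ) = ((2:ℕ):ℝ) by norm_num, Real.rpow_natCast]
    ring
  have hTnorm : ∀ z (x : 𝓗), ‖T z x‖ = ‖c z‖ * ‖x‖ := by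
    intro z x
    rw [hTdef]
    simp only [ContinuousLinearMap.smul_apply]
    rw [norm_smul, hUiso]
  have hSnorm : ∀ z (x : 𝓗), ‖S z x‖ = ‖c z‖⁻¹ * ‖x‖ := by
    intro z x
    rw [hSdef]
    simp only [ContinuousLinearMap.smul_apply]
    rw [norm_smul, hUiso, norm_inv]
  have hptT : ∀ z (x : 𝓗),
      ENNReal.ofReal (ρ z) * (‖T z x‖₊ : ℝ≥0∞) ^ (2:ℝ) = (‖x‖₊ : ℝ≥0∞) ^ (2:ℝ) := by
    intro z x
    simp only [← enorm_eq_nnnorm]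
    rw [← ofReal_norm, ← ofReal_norm,
      ENNReal.ofReal_rpow_of_nonneg (norm_nonneg _) (by norm_num : (0:ℝ) ≤ 2),
      ENNReal.ofReal_rpow_of_nonneg (norm_nonneg _) (by norm_num : (0:ℝ) ≤ 2),
      ← ENNReal.ofReal_mul (hρpos z).le]
    congr 1
    rw [hsq _ (norm_nonneg _), hsq _ (norm_nonneg _), hTnorm]
    have e : ρ z * (‖c z‖ * ‖x‖ * (‖c z‖ * ‖x‖)) = ρ z * (‖c z‖ * ‖c z‖) * (‖x‖ * ‖x‖) := by
      ring
    rw [e, hcnorm z, one_mul]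
  have hptS : ∀ z (x : 𝓗),
      (‖S z x‖₊ : ℝ≥0∞) ^ (2:ℝ) = ENNReal.ofReal (ρ z) * (‖x‖₊ : ℝ≥0∞) ^ (2:ℝ) := by
    intro z x
    simp only [← enorm_eq_nnnorm]
    rw [← ofReal_norm, ← ofReal_norm,
      ENNReal.ofReal_rpow_of_nonneg (norm_nonneg _) (by norm_num : (0:ℝ) ≤ 2),
      ENNReal.ofReal_rpow_of_nonneg (norm_nonneg _) (by norm_num : (0:ℝ) ≤ 2),
      ← ENNReal.ofReal_mul (hρpos z).le]
    congr 1
    rw [hsq _ (norm_nonneg _), hsq _ (norm_nonneg _), hSnorm]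
    have hcne : ‖c z‖ ≠ 0 := norm_ne_zero_iff.mpr (hc0 z)
    have hρeq : ρ z = ‖c z‖⁻¹ * ‖c z‖⁻¹ := by
      rw [← mul_inv]
      exact eq_inv_of_mul_eq_one_left (hcnorm z)
    rw [hρeq]
    ring
  obtain ⟨W, hW⟩ := dressing_aux T S hTc hSc ρ hρc hρpos hST hTS hptT hptS
  refine ⟨W, fun η => ?_⟩
  filter_upwards [hW η] with z hz
  rw [hz, hTdef]
  simp only [ContinuousLinearMap.smul_apply]
  rfl
end

section
/- Let 𝓗 be a complex Hilbert space, H a bounded self-adjoint operator on 𝓗, S a unitary operator on 𝓗, ℏ > 0, and fix s > 0. Define the operator-valued function V(t) := exp((i/ℏ)(s−t)H) ∘ S^{n(t)} ∘ exp(−(i/ℏ)sH), where n(t) = 1 if t > s and n(t) = 0 otherwise. Then: (i) V(t) is unitary for every t ∈ ℝ and V(0) = I; (ii) t ↦ V(t) is differentiable (in operator norm) at every t ≠ s and satisfies the Schrödinger equation iℏ (d/dt)V(t) = H V(t) there; (iii) V is continuous from the left at t = s, and the right limit satisfies lim_{t↘s} V(t) = S V(s), i.e. the evolution has the single unitary jump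 S at the instant t = s. -/
open scoped Topology

open NormedSpace in
/-- The **single-jump stochastic unitary evolution**
`V(t) = e^{(i/ℏ)(s−t)H} S^{n(t)} e^{−(i/ℏ)sH}` (with `n(t) = 1` for `t > s`, `0`
otherwise): (i) each `V(t)` is unitary and `V(0) = I`; (ii) away from `t = s` it is
differentiable in operator norm and satisfies `iℏ V'(t) = H V(t)`; (iii) it is
continuous from the left at `t = s`, while the right limit is `S V(s)` — the single
unitary jump `S` at the instant `t = s`. -/
theorem single_jump_evolution {𝓗 : Type*} [NormedAddCommGroup 𝓗]
    [InnerProductSpace ℂ 𝓗] [CompleteSpace 𝓗]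
    (H : 𝓗 →L[ℂ] 𝓗) (hH : IsSelfAdjoint H)
    (S : 𝓗 →L[ℂ] 𝓗) (hS : S ∈ unitary (𝓗 →L[ℂ] 𝓗))
    (ℏ : ℝ) (hℏ : 0 < ℏ)
    (s : ℝ) (hs : 0 < s)
    (V : ℝ → (𝓗 →L[ℂ] 𝓗))
    (hV : ∀ t : ℝ, V t
      = (NormedSpace.exp (((Complex.I * ((s : ℂ) - (t : ℂ))) / (ℏ : ℂ)) • H)).comp
          ((if s < t then S else (1 : 𝓗 →L[ℂ] 𝓗)).comp
            (NormedSpace.exp ((-(Complex.I * (s : ℂ)) / (ℏ : ℂ)) • H)))) :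
    (∀ t : ℝ, V t ∈ unitary (𝓗 →L[ℂ] 𝓗)) ∧ V 0 = 1
    ∧ (∀ t : ℝ, t ≠ s → ∃ D : 𝓗 →L[ℂ] 𝓗,
        HasDerivAt V D t ∧ (Complex.I * (ℏ : ℂ)) • D = H.comp (V t))
    ∧ Filter.Tendsto V (𝓝[<] s) (𝓝 (V s))
    ∧ Filter.Tendsto V (𝓝[>] s) (𝓝 (S.comp (V s))) := by
  have hℏ0 : (ℏ : ℂ) ≠ 0 := by exact_mod_cast hℏ.ne'
  let +nondep : NormedAlgebra ℚ (𝓗 →L[ℂ] 𝓗) := .restrictScalars ℚ ℂ _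
  -- basic operators
  set B : 𝓗 →L[ℂ] 𝓗 := ((-Complex.I) / (ℏ : ℂ)) • H with hB
  set A : 𝓗 →L[ℂ] 𝓗 := exp ((Complex.I * (s : ℂ) / (ℏ : ℂ)) • H) with hA
  set E0 : 𝓗 →L[ℂ] 𝓗 := exp ((-(Complex.I * (s : ℂ)) / (ℏ : ℂ)) • H) with hE0
  -- skew-adjointness helper
  have hskew : ∀ c : ℂ, (starRingEnd ℂ) c = -c → (c • H) ∈ skewAdjoint (𝓗 →L[ℂ] 𝓗) := by
    intro c hc
    exact hH.smul_mem_skewAdjoint (by simpa [skewAdjoint.mem_iff] using hc)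
  have hconj : ∀ t : ℝ, (starRingEnd ℂ) ((Complex.I * ((s : ℂ) - (t : ℂ))) / (ℏ : ℂ))
      = -((Complex.I * ((s : ℂ) - (t : ℂ))) / (ℏ : ℂ)) := by
    intro t
    simp [map_div₀, map_mul, Complex.conj_I, Complex.conj_ofReal, neg_div, neg_mul]
  have hconj0 : (starRingEnd ℂ) (-(Complex.I * (s : ℂ)) / (ℏ : ℂ))
      = -(-(Complex.I * (s : ℂ)) / (ℏ : ℂ)) := by
    simp [map_div₀, map_mul, Complex.conj_I, Complex.conj_ofReal, neg_div, neg_mul]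
  have hE0u : E0 ∈ unitary (𝓗 →L[ℂ] 𝓗) :=
    exp_mem_unitary_of_mem_skewAdjoint (hskew _ hconj0)
  -- decomposition of the exponential
  have hsplit : ∀ t : ℝ,
      exp (((Complex.I * ((s : ℂ) - (t : ℂ))) / (ℏ : ℂ)) • H)
        = A * exp ((t : ℂ) • B) := by
    intro t
    rw [hA, hB, smul_smul, ← exp_add_of_commute (((Commute.refl H).smul_left _).smul_right _),
      ← add_smul]
    congr 2
    field_simp
    ring
  -- V in product form
  have hVt : ∀ t : ℝ, V t = A * exp ((t : ℂ) • B) *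
      ((if s < t then S else 1) * E0) := by
    intro t
    rw [hV t, ← hsplit t]
    rfl
  -- key commutation facts
  have hHB : Commute H B := (Commute.refl H).smul_right _
  have hHexp : ∀ z : ℂ, Commute H (exp (z • B)) :=
    fun z => (hHB.smul_right z).exp_right
  have hHA : Commute H A := ((Commute.refl H).smul_right _).exp_right
  -- at t = s the first two factors cancel
  have hAs : A * exp ((s : ℂ) • B) = 1 := by
    rw [hA, hB, smul_smul, ← exp_add_of_commute (((Commute.refl H).smul_left _).smul_right _),
      ← add_smul]
    have : Complex.I * (s : ℂ) / (ℏ : ℂ) + (s : ℂ) * (-Complex.I / (ℏ : ℂ)) = 0 := by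
      field_simp; ring
    rw [this, zero_smul, exp_zero]
  have hVs : V s = E0 := by
    rw [hVt s, hAs, if_neg (lt_irrefl s), one_mul, one_mul]
  -- continuity of the smooth branches
  have hcont : ∀ C : 𝓗 →L[ℂ] 𝓗,
      Continuous fun t : ℝ => A * exp ((t : ℂ) • B) * C := by
    intro C
    exact (continuous_const.mul ((exp_continuous).comp
      (Complex.continuous_ofReal.smul continuous_const))).mul continuous_const
  refine ⟨?_, ?_, ?_, ?_, ?_⟩
  · -- unitarity
    intro t
    rw [hV t]
    have h1 : exp (((Complex.I * ((s : ℂ) - (t : ℂ))) / (ℏ : ℂ)) • H)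
        ∈ unitary (𝓗 →L[ℂ] 𝓗) :=
      exp_mem_unitary_of_mem_skewAdjoint (hskew _ (hconj t))
    have h2 : (if s < t then S else 1) ∈ unitary (𝓗 →L[ℂ] 𝓗) := by
      split
      · exact hS
      · exact one_mem _
    exact mul_mem h1 (mul_mem h2 hE0u)
  · -- V 0 = 1
    rw [hVt 0, if_neg (by linarith), one_mul, Complex.ofReal_zero, zero_smul, exp_zero, mul_one,
      hA, hE0, ← exp_add_of_commute (((Commute.refl H).smul_left _).smul_right _), ← add_smul]
    have : Complex.I * (s : ℂ) / (ℏ : ℂ) + -(Complex.I * (s : ℂ)) / (ℏ : ℂ) = 0 := by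
      field_simp
      ring
    rw [this, zero_smul, exp_zero]
  · -- the Schrödinger equation away from t = s
    intro t ht
    set P : 𝓗 →L[ℂ] 𝓗 := if s < t then S else 1 with hP
    refine ⟨A * (exp ((t : ℂ) • B) * B) * (P * E0), ?_, ?_⟩
    · have hd0 : HasDerivAt (fun z : ℂ => exp (z • B)) (exp ((t : ℂ) • B) * B)
          ((t : ℝ) : ℂ) := hasDerivAt_exp_smul_const B (t : ℂ)
      have hd1 : HasDerivAt (fun u : ℝ => exp ((u : ℂ) • B)) (exp ((t : ℂ) • B) * B) t :=
        by simpa [Function.comp_def] using HasDerivAt.scomp t hd0 Complex.ofRealCLM.hasDerivAt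
      have hd : HasDerivAt (fun u : ℝ => A * exp ((u : ℂ) • B) * (P * E0))
          (A * (exp ((t : ℂ) • B) * B) * (P * E0)) t :=
        (HasDerivAt.const_mul A hd1).mul_const (P * E0)
      refine hd.congr_of_eventuallyEq ?_
      rcases lt_or_gt_of_ne ht with h | h
      · filter_upwards [eventually_lt_nhds h] with u hu
        rw [hVt u, if_neg (by linarith), hP, if_neg (not_lt.mpr h.le)]
      · filter_upwards [eventually_gt_nhds h] with u hu
        rw [hVt u, if_pos (by linarith), hP, if_pos h]
    · rw [hVt t, ← hP]
      have h1 : (Complex.I * (ℏ : ℂ)) • B = H := by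
        rw [hB, smul_smul]
        have : Complex.I * (ℏ : ℂ) * (-Complex.I / (ℏ : ℂ)) = 1 := by
          field_simp
          linear_combination (-1 : ℂ) * Complex.I_sq
        rw [this, one_smul]
      calc (Complex.I * (ℏ : ℂ)) • (A * (exp ((t : ℂ) • B) * B) * (P * E0))
          = A * (exp ((t : ℂ) • B) * ((Complex.I * (ℏ : ℂ)) • B)) * (P * E0) := by
            simp only [smul_mul_assoc, mul_smul_comm]
        _ = A * (exp ((t : ℂ) • B) * H) * (P * E0) := by rw [h1]
        _ = H * (A * exp ((t : ℂ) • B) * (P * E0)) := by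
            rw [← (hHexp ((t : ℂ))).eq, ← mul_assoc, ← mul_assoc, ← hHA.eq]
            simp only [mul_assoc]
        _ = H.comp (A * exp ((t : ℂ) • B) * (P * E0)) := rfl
  · -- left continuity at s
    have h1 : Filter.Tendsto (fun t : ℝ => A * exp ((t : ℂ) • B) * (1 * E0))
        (𝓝[<] s) (𝓝 (V s)) := by
      have key : A * exp ((s : ℂ) • B) * (1 * E0) = V s := by
        rw [hAs, one_mul, one_mul, hVs]
      rw [← key]
      exact ((hcont (1 * E0)).tendsto s).mono_left nhdsWithin_le_nhds
    refine h1.congr' ?_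
    filter_upwards [self_mem_nhdsWithin] with u (hu : u < s)
    rw [hVt u, if_neg (not_lt.mpr hu.le)]
  · -- right limit is S ∘ V s
    have h1 : Filter.Tendsto (fun t : ℝ => A * exp ((t : ℂ) • B) * (S * E0))
        (𝓝[>] s) (𝓝 (S.comp (V s))) := by
      have key : A * exp ((s : ℂ) • B) * (S * E0) = S.comp (V s) := by
        rw [hAs, one_mul, hVs]; rfl
      rw [← key]
      exact ((hcont (S * E0)).tendsto s).mono_left nhdsWithin_le_nhds
    refine h1.congr' ?_
    filter_upwards [self_mem_nhdsWithin] with u (hu : s < u)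
    rw [hVt u, if_pos hu]
end

section
/- Let 𝓗 be a complex Hilbert space, H a bounded self-adjoint operator on 𝓗, S a unitary operator on 𝓗, ℏ > 0, u : ℝ → ℂ continuous, and χ⁰ : ℝ → 𝓗 continuously differentiable. For t > 0 define χᵗ(z) := exp((i/ℏ)∫_0^z u(r)dr) · exp((i/ℏ)zH) · S^{Δ(t, z+t)} · exp(−(i/ℏ)(z+t)H) · exp(−(i/ℏ)∫_0^{z+t} u(r)dr) · χ⁰(z+t), with Δ(t,s) := 1_t(s) − 1_0(s). Then: (i) for every t > 0 and every z ∉ {0, −t}, the partial derivatives ∂_t χᵗ(z) and ∂_z χᵗ(z) exist and satisfy the Schrödinger equation iℏ ∂_t χᵗ(z) = u(z) χᵗ(z) + iℏ ∂_z χᵗ(z) + H χᵗ(z); (ii) for every t > 0 the left limit at the boundary satisfies lim_{z↗0} χᵗ(z) = S χᵗ(0). -/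
open scoped Topology

section Helpers

variable {𝓗 : Type*} [NormedAddCommGroup 𝓗] [InnerProductSpace ℂ 𝓗] [CompleteSpace 𝓗]

private lemma clm_hasDerivAt (T : 𝓗 →L[ℂ] 𝓗) {v : ℝ → 𝓗} {v' : 𝓗} {x : ℝ}
    (hv : HasDerivAt v v' x) : HasDerivAt (fun w => T (v w)) (T v') x :=
  (T.restrictScalars ℝ).hasFDerivAt.comp_hasDerivAt x hv

private lemma exp_hasDerivAt (H : 𝓗 →L[ℂ] 𝓗) (a : ℂ) (z : ℝ) {v : ℝ → 𝓗} {v' : 𝓗}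
    (hv : HasDerivAt v v' z) :
    HasDerivAt (fun w : ℝ => NormedSpace.exp ((a * (w : ℂ)) • H) (v w))
      (a • NormedSpace.exp ((a * (z : ℂ)) • H) (H (v z))
        + NormedSpace.exp ((a * (z : ℂ)) • H) v') z := by
  have h2 : HasDerivAt (fun w : ℝ => a * (w : ℂ)) a z := by
    simpa using (Complex.ofRealCLM.hasDerivAt (x := z)).const_mul a
  have h1 : HasDerivAt (fun w : ℝ => NormedSpace.exp ((a * (w : ℂ)) • H))
      (a • (NormedSpace.exp ((a * (z : ℂ)) • H) * H)) z := by
    simpa [Function.comp_def] using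
      HasDerivAt.scomp (x := z) (hg := hasDerivAt_exp_smul_const (𝕂 := ℂ) H (a * (z : ℂ))) (hh := h2)
  have h3 : HasDerivAt
      (fun w : ℝ => (NormedSpace.exp ((a * (w : ℂ)) • H)).restrictScalars ℝ)
      ((a • (NormedSpace.exp ((a * (z : ℂ)) • H) * H)).restrictScalars ℝ) z := by
    simpa [Function.comp_def] using
      (ContinuousLinearMap.restrictScalarsL ℂ 𝓗 𝓗 ℝ ℝ).hasFDerivAt.comp_hasDerivAt z h1
  have h4 := h3.clm_apply hv
  simpa [ContinuousLinearMap.mul_apply, add_comm] using h4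

end Helpers


/-- The explicit solution
`χᵗ(z) = e^{(i/ℏ)∫_0^z u} e^{(i/ℏ)zH} S^{Δ(t,z+t)} e^{−(i/ℏ)(z+t)H}
e^{−(i/ℏ)∫_0^{z+t} u} χ0(z+t)` of the toy Schrödinger boundary value problem:
(i) away from `z = 0` and `z = −t` both partial derivatives exist and
`iℏ ∂_t χᵗ(z) = u(z) χᵗ(z) + iℏ ∂_z χᵗ(z) + H χᵗ(z)`; (ii) at the boundary
`lim_{z↗0} χᵗ(z) = S χᵗ(0)` for every `t > 0`. -/
theorem toy_model_solution_pde_and_boundary {𝓗 : Type*} [NormedAddCommGroup 𝓗]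
    [InnerProductSpace ℂ 𝓗] [CompleteSpace 𝓗]
    (H : 𝓗 →L[ℂ] 𝓗) (hH : IsSelfAdjoint H)
    (S : unitary (𝓗 →L[ℂ] 𝓗))
    (ℏ : ℝ) (hℏ : 0 < ℏ)
    (u : ℝ → ℂ) (hu : Continuous u)
    (χ0 : ℝ → 𝓗) (hχ0 : ContDiff ℝ 1 χ0)
    (Δ : ℝ → ℝ → ℤ)
    (hΔ : ∀ t s, Δ t s = (if s < t then 1 else 0) - (if s < 0 then 1 else 0))
    (χ : ℝ → ℝ → 𝓗)
    (hχ : ∀ t z : ℝ, χ t z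
      = Complex.exp ((Complex.I / (ℏ : ℂ)) * ∫ r in (0:ℝ)..z, u r) •
          (NormedSpace.exp (((Complex.I / (ℏ : ℂ)) * (z : ℂ)) • H))
            ((↑(S ^ (Δ t (z + t))) : 𝓗 →L[ℂ] 𝓗)
              ((NormedSpace.exp ((-((Complex.I / (ℏ : ℂ)) * ((z : ℂ) + (t : ℂ)))) • H))
                (Complex.exp (-((Complex.I / (ℏ : ℂ)) * ∫ r in (0:ℝ)..(z + t), u r)) •
                  χ0 (z + t))))) :
    (∀ t : ℝ, 0 < t → ∀ z : ℝ, z ≠ 0 → z ≠ -t →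
      ∃ Dt Dz : 𝓗, HasDerivAt (fun τ : ℝ => χ τ z) Dt t
        ∧ HasDerivAt (fun w : ℝ => χ t w) Dz z
        ∧ (Complex.I * (ℏ : ℂ)) • Dt
            = u z • χ t z + (Complex.I * (ℏ : ℂ)) • Dz + H (χ t z))
    ∧ ∀ t : ℝ, 0 < t →
        Filter.Tendsto (fun z : ℝ => χ t z) (𝓝[<] (0:ℝ))
          (𝓝 ((↑S : 𝓗 →L[ℂ] 𝓗) (χ t 0))) := by
  have hℏ0 : (ℏ : ℂ) ≠ 0 := by exact_mod_cast hℏ.ne'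
  set a : ℂ := Complex.I / (ℏ : ℂ) with ha
  have hInt : ∀ s : ℝ, HasDerivAt (fun b : ℝ => ∫ r in (0:ℝ)..b, u r) (u s) s := fun s =>
    intervalIntegral.integral_hasDerivAt_right (hu.intervalIntegrable _ _)
      (hu.stronglyMeasurableAtFilter _ _) hu.continuousAt
  set g : ℝ → 𝓗 := fun s =>
    NormedSpace.exp (((-a) * (s : ℂ)) • H)
      (Complex.exp ((-a) * ∫ r in (0:ℝ)..s, u r) • χ0 s) with hgdef
  have hvin : ∀ s : ℝ,
      HasDerivAt (fun s : ℝ => Complex.exp ((-a) * ∫ r in (0:ℝ)..s, u r) • χ0 s)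
        (Complex.exp ((-a) * ∫ r in (0:ℝ)..s, u r) • deriv χ0 s
          + (Complex.exp ((-a) * ∫ r in (0:ℝ)..s, u r) * ((-a) * u s)) • χ0 s) s := by
    intro s
    have h1 : HasDerivAt (fun s : ℝ => Complex.exp ((-a) * ∫ r in (0:ℝ)..s, u r))
        (Complex.exp ((-a) * ∫ r in (0:ℝ)..s, u r) * ((-a) * u s)) s :=
      ((hInt s).const_mul (-a)).cexp
    exact h1.smul ((hχ0.differentiable one_ne_zero s).hasDerivAt)
  have hg : ∀ s : ℝ, HasDerivAt g (deriv g s) s := fun s =>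
    ((exp_hasDerivAt H (-a) s (hvin s)).differentiableAt).hasDerivAt
  set c : ℝ → ℂ := fun w => Complex.exp (a * ∫ r in (0:ℝ)..w, u r) with hcdef
  have hcd : ∀ w : ℝ, HasDerivAt c (c w * (a * u w)) w := fun w =>
    ((hInt w).const_mul a).cexp
  have hχ' : ∀ t z : ℝ, χ t z = c z •
      NormedSpace.exp ((a * (z : ℂ)) • H)
        ((↑(S ^ (Δ t (z + t))) : 𝓗 →L[ℂ] 𝓗) (g (z + t))) := by
    intro t z
    rw [hχ t z]
    have e1 : (-(a * ((z : ℂ) + (t : ℂ)))) = (-a) * (((z + t : ℝ) : ℂ)) := by push_cast; ring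
    have e2 : (-(a * ∫ r in (0:ℝ)..(z + t), u r)) = (-a) * ∫ r in (0:ℝ)..(z + t), u r := by
      ring
    rw [e1, e2]
  have hsign : ∀ x : ℝ, x ≠ 0 → ∀ᶠ y in 𝓝 x, (y < 0 ↔ x < 0) := by
    intro x hx
    rcases hx.lt_or_gt with h | h
    · filter_upwards [Iio_mem_nhds h] with y hy
      exact iff_of_true hy h
    · filter_upwards [Ioi_mem_nhds h] with y hy
      exact iff_of_false (not_lt.2 hy.le) (not_lt.2 h.le)
  constructor
  · intro t ht z hz hz'
    have hzt : z + t ≠ 0 := fun h => hz' (by linarith)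
    set k : ℤ := Δ t (z + t) with hk
    set Sk : 𝓗 →L[ℂ] 𝓗 := (↑(S ^ k) : 𝓗 →L[ℂ] 𝓗) with hSk
    -- derivative in t of the frozen formula
    have hgz : HasDerivAt (fun τ : ℝ => g (z + τ)) (deriv g (z + t)) t := by
      have := HasDerivAt.scomp (x := t) (hg := hg (z + t))
        (hh := (hasDerivAt_id t).const_add z)
      simpa [Function.comp_def] using this
    have hDt : HasDerivAt
        (fun τ : ℝ => c z • NormedSpace.exp ((a * (z : ℂ)) • H) (Sk (g (z + τ))))
        (c z • NormedSpace.exp ((a * (z : ℂ)) • H) (Sk (deriv g (z + t)))) t := by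
      exact ((clm_hasDerivAt (NormedSpace.exp ((a * (z : ℂ)) • H))
        (clm_hasDerivAt Sk hgz))).const_smul (c z)
    -- derivative in z of the frozen formula
    have hgw : HasDerivAt (fun w : ℝ => g (w + t)) (deriv g (z + t)) z := by
      have := HasDerivAt.scomp (x := z) (hg := hg (z + t))
        (hh := (hasDerivAt_id z).add_const t)
      simpa [Function.comp_def] using this
    have hDz := (hcd z).smul (exp_hasDerivAt H a z (clm_hasDerivAt Sk hgw))
    -- eventual equalities
    have hevt : (fun τ : ℝ => χ τ z) =ᶠ[𝓝 t]
        fun τ : ℝ => c z • NormedSpace.exp ((a * (z : ℂ)) • H) (Sk (g (z + τ))) := by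
      have h1 : Filter.Tendsto (fun τ : ℝ => z + τ) (𝓝 t) (𝓝 (z + t)) :=
        (continuous_const.add continuous_id).continuousAt
      filter_upwards [h1.eventually (hsign (z + t) hzt)] with τ hτ
      have hΔeq : Δ τ (z + τ) = k := by
        rw [hk, hΔ, hΔ]
        have e1 : (z + τ < τ) ↔ (z < 0) := by constructor <;> intro <;> linarith
        have e2 : (z + t < t) ↔ (z < 0) := by constructor <;> intro <;> linarith
        simp only [e1, e2, hτ]
      rw [hχ' τ z, hΔeq, hSk]
    have hevz : (fun w : ℝ => χ t w) =ᶠ[𝓝 z]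
        fun w : ℝ => c w • NormedSpace.exp ((a * (w : ℂ)) • H) (Sk (g (w + t))) := by
      have h1 : Filter.Tendsto (fun w : ℝ => w + t) (𝓝 z) (𝓝 (z + t)) :=
        (continuous_id.add continuous_const).continuousAt
      filter_upwards [h1.eventually (hsign (z + t) hzt), hsign z hz] with w hw hw0
      have hΔeq : Δ t (w + t) = k := by
        rw [hk, hΔ, hΔ]
        have e1 : (w + t < t) ↔ (w < 0) := by constructor <;> intro <;> linarith
        have e2 : (z + t < t) ↔ (z < 0) := by constructor <;> intro <;> linarith
        simp only [e1, e2, hw, hw0]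
      rw [hχ' t w, hΔeq, hSk]
    refine ⟨_, _, hDt.congr_of_eventuallyEq hevt, hDz.congr_of_eventuallyEq hevz, ?_⟩
    -- the algebraic identity
    have hχtz : χ t z = c z • NormedSpace.exp ((a * (z : ℂ)) • H) (Sk (g (z + t))) := by
      rw [hχ' t z, ← hk, ← hSk]
    have hcomm : ∀ x : 𝓗, H (NormedSpace.exp ((a * (z : ℂ)) • H) x)
        = NormedSpace.exp ((a * (z : ℂ)) • H) (H x) := by
      intro x
      have hcom : Commute ((a * (z : ℂ)) • H) H := (Commute.refl H).smul_left _
      have := hcom.exp_left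
      calc H (NormedSpace.exp ((a * (z : ℂ)) • H) x)
          = (H * NormedSpace.exp ((a * (z : ℂ)) • H)) x := rfl
        _ = (NormedSpace.exp ((a * (z : ℂ)) • H) * H) x := by rw [this.eq]
        _ = _ := rfl
    rw [hχtz, map_smul, hcomm]
    set A : 𝓗 := NormedSpace.exp ((a * (z : ℂ)) • H) (Sk (g (z + t))) with hA
    set B : 𝓗 := NormedSpace.exp ((a * (z : ℂ)) • H) (H (Sk (g (z + t)))) with hB
    set C : 𝓗 := NormedSpace.exp ((a * (z : ℂ)) • H) (Sk (deriv g (z + t))) with hC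
    have h9 : Complex.I * (ℏ : ℂ) * a = -1 := by
      rw [ha]
      field_simp
      linear_combination Complex.I_mul_I
    match_scalars
    · field_simp
    · linear_combination (-(u z * c z)) * h9
    · linear_combination (-(c z)) * h9
  · intro t ht
    have hχt0 : χ t 0 = g t := by
      rw [hχ' t 0]
      have h0 : Δ t (0 + t) = 0 := by
        rw [hΔ]; simp [not_lt.2 ht.le, lt_irrefl]
      rw [h0, zero_add, hcdef, hgdef]
      simp only [Complex.ofReal_zero, mul_zero, zero_smul, NormedSpace.exp_zero, zpow_zero,
        intervalIntegral.integral_same, Complex.exp_zero, one_smul,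
        ContinuousLinearMap.one_apply, OneMemClass.coe_one]
    have hS1 : HasDerivAt (fun w : ℝ => (↑S : 𝓗 →L[ℂ] 𝓗) (g (w + t)))
        ((↑S : 𝓗 →L[ℂ] 𝓗) (deriv g t)) 0 := by
      refine clm_hasDerivAt _ ?_
      have := HasDerivAt.scomp (x := (0:ℝ)) (hg := hg (0 + t))
        (hh := (hasDerivAt_id (0:ℝ)).add_const t)
      simpa [Function.comp_def] using this
    have hcont : ContinuousAt
        (fun w : ℝ => c w • NormedSpace.exp ((a * (w : ℂ)) • H)
          ((↑S : 𝓗 →L[ℂ] 𝓗) (g (w + t)))) 0 :=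
      ((hcd 0).smul (exp_hasDerivAt H a 0 hS1)).continuousAt
    have hIoo : Set.Ioo (-t) 0 ∈ 𝓝[<] (0:ℝ) :=
      Ioo_mem_nhdsLT_of_mem ⟨neg_lt_zero.2 ht, le_refl 0⟩
    have hev : (fun w : ℝ => χ t w) =ᶠ[𝓝[<] (0:ℝ)]
        fun w : ℝ => c w • NormedSpace.exp ((a * (w : ℂ)) • H)
          ((↑S : 𝓗 →L[ℂ] 𝓗) (g (w + t))) := by
      filter_upwards [hIoo] with w hw
      have hΔ1 : Δ t (w + t) = 1 := by
        rw [hΔ, if_pos (by linarith [hw.2]), if_neg (by push_neg; linarith [hw.1])]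
        ring
      rw [hχ' t w, hΔ1, zpow_one]
    have hval : c 0 • NormedSpace.exp ((a * ((0:ℝ) : ℂ)) • H)
        ((↑S : 𝓗 →L[ℂ] 𝓗) (g (0 + t))) = (↑S : 𝓗 →L[ℂ] 𝓗) (χ t 0) := by
      rw [hχt0, zero_add, hcdef]
      simp only [Complex.ofReal_zero, mul_zero, zero_smul, NormedSpace.exp_zero,
        intervalIntegral.integral_same, Complex.exp_zero, one_smul,
        ContinuousLinearMap.one_apply]
    refine Filter.Tendsto.congr' hev.symm ?_
    have h2 := hcont.tendsto.mono_left (nhdsWithin_le_nhds (s := Set.Iio (0:ℝ)))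
    rwa [hval] at h2
end

section
/- Let 𝓗 be a complex Hilbert space, ℏ > 0, ρ : ℝ → (0,∞) continuously differentiable, and u : ℝ → ℂ continuous with ℏ ρ'(z) = 2 Im u(z) · ρ(z) for all z. Let χ : ℝ → 𝓗 be compactly supported, continuously differentiable on (−∞,0] and on [0,∞) separately (with one-sided limits χ(0_−), χ(0) at 0), and suppose the boundary condition preserves the norm: ‖χ(0_−)‖ = ‖χ(0)‖ (for instance χ(0_−) = Sχ(0) with S unitary). Then Im ∫_ℝ ⟨χ(z), u(z)χ(z) + iℏ χ'(z)⟩ ρ(z) dz = 0; that is, the operator ĥχ = uχ + iℏ∂_zχ is symmetric on the ρ-weighted space relative to the unitary boundary condition. -/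
open scoped InnerProductSpace

open MeasureTheory Set

private lemma aux_im {𝓗 : Type*} [NormedAddCommGroup 𝓗] [InnerProductSpace ℂ 𝓗]
    (x y : 𝓗) (u : ℂ) (ℏ r : ℝ) :
    ((⟪x, u • x + (Complex.I * (ℏ:ℂ)) • y⟫_ℂ) * (r:ℂ)).im
      = u.im * ‖x‖^2 * r + ℏ * (⟪x,y⟫_ℂ).re * r := by
  rw [inner_add_right, inner_smul_right, inner_smul_right, inner_self_eq_norm_sq_to_K]
  simp [Complex.add_im, Complex.mul_im, Complex.mul_re, ← Complex.ofReal_pow]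
  ring

private lemma aux_hasDerivAt {𝓗 : Type*} [NormedAddCommGroup 𝓗] [InnerProductSpace ℂ 𝓗]
    (ℏ : ℝ) (ρ : ℝ → ℝ) (hρ : ContDiff ℝ 1 ρ) (φ : ℝ → 𝓗) (hφ : ContDiff ℝ 1 φ) (z : ℝ) :
    HasDerivAt (fun t => ℏ/2 * (‖φ t‖^2 * ρ t))
      (ℏ/2 * (2 * (⟪φ z, deriv φ z⟫_ℂ).re * ρ z + ‖φ z‖^2 * deriv ρ z)) z := by
  have hφ' : HasDerivAt φ (deriv φ z) z := (hφ.differentiable one_ne_zero z).hasDerivAt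
  have hρ' : HasDerivAt ρ (deriv ρ z) z := (hρ.differentiable one_ne_zero z).hasDerivAt
  have h1 : HasDerivAt (fun t => (⟪φ t, φ t⟫_ℂ))
      (⟪φ z, deriv φ z⟫_ℂ + ⟪deriv φ z, φ z⟫_ℂ) z := HasDerivAt.inner ℂ hφ' hφ'
  have h2 := Complex.reCLM.hasFDerivAt.comp_hasDerivAt z h1
  have h3 : HasDerivAt (fun t => ‖φ t‖^2) (2 * (⟪φ z, deriv φ z⟫_ℂ).re) z := by
    convert h2 using 1
    · rfl
    · rfl
    · funext t
      simpa using (inner_self_eq_norm_sq (𝕜 := ℂ) (φ t)).symm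
    · have := inner_conj_symm (𝕜 := ℂ) (φ z) (deriv φ z)
      simp only [Complex.reCLM_apply, Complex.add_re]
      rw [← this, Complex.conj_re]
      ring
  exact (h3.mul hρ').const_mul (ℏ/2)

/-- **Symmetry of `ĥ = u + iℏ∂_z` on the ρ-weighted space under a unitary boundary
condition**: if `ℏ ρ' = 2 (Im u) ρ`, `χ` is compactly supported and piecewise `C¹`
(given by `C¹` functions `χ₋` on `(−∞,0)` and `χ₊` on `[0,∞)`), and the boundary
norms agree, `‖χ(0_−)‖ = ‖χ(0)‖`, then
`Im ∫ ⟨χ(z), u(z)χ(z) + iℏ χ'(z)⟩ ρ(z) dz = 0`. -/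
theorem toy_hamiltonian_symmetric {𝓗 : Type*} [NormedAddCommGroup 𝓗]
    [InnerProductSpace ℂ 𝓗] [CompleteSpace 𝓗]
    (ℏ : ℝ) (hℏ : 0 < ℏ)
    (ρ : ℝ → ℝ) (hρpos : ∀ z, 0 < ρ z) (hρC1 : ContDiff ℝ 1 ρ)
    (u : ℝ → ℂ) (hu : Continuous u)
    (hlog : ∀ z, ℏ * deriv ρ z = 2 * (u z).im * ρ z)
    (χm χp : ℝ → 𝓗) (hχm : ContDiff ℝ 1 χm) (hχp : ContDiff ℝ 1 χp)
    (χ : ℝ → 𝓗) (hχ : ∀ z, χ z = if z < 0 then χm z else χp z)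
    (hsupp : HasCompactSupport χ)
    (hbd : ‖χm 0‖ = ‖χp 0‖) :
    (∫ z : ℝ, (⟪χ z, u z • χ z
        + (Complex.I * (ℏ : ℂ)) • (if z < 0 then deriv χm z else deriv χp z)⟫_ℂ)
      * (ρ z : ℂ)).im = 0 := by
  obtain ⟨K, hK0, hKz⟩ := hsupp.exists_pos_le_norm
  -- vanishing of the pieces far away
  have hχm0 : ∀ z, z < -K → χm z = 0 := by
    intro z hz
    have h0 : z < 0 := hz.trans (by linarith)
    have := hKz z (by rw [Real.norm_eq_abs, abs_of_neg h0]; linarith)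
    rw [hχ z, if_pos h0] at this; exact this
  have hχp0 : ∀ z, K < z → χp z = 0 := by
    intro z hz
    have h0 : ¬ z < 0 := by linarith
    have := hKz z (by rw [Real.norm_eq_abs, abs_of_pos (by linarith)]; linarith)
    rw [hχ z, if_neg h0] at this; exact this
  have hdχm0 : ∀ z, z < -K → deriv χm z = 0 := by
    intro z hz
    have hev : χm =ᶠ[nhds z] (fun _ => (0:𝓗)) := by
      filter_upwards [Iio_mem_nhds hz] with t ht using hχm0 t ht
    rw [hev.deriv_eq, deriv_const]
  have hdχp0 : ∀ z, K < z → deriv χp z = 0 := by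
    intro z hz
    have hev : χp =ᶠ[nhds z] (fun _ => (0:𝓗)) := by
      filter_upwards [Ioi_mem_nhds hz] with t ht using hχp0 t ht
    rw [hev.deriv_eq, deriv_const]
  -- the two smooth integrands
  set fm : ℝ → ℂ := fun z => (⟪χm z, u z • χm z + (Complex.I * (ℏ:ℂ)) • deriv χm z⟫_ℂ) * (ρ z : ℂ) with hfm
  set fp : ℝ → ℂ := fun z => (⟪χp z, u z • χp z + (Complex.I * (ℏ:ℂ)) • deriv χp z⟫_ℂ) * (ρ z : ℂ) with hfp
  have hdχmc : Continuous (deriv χm) := hχm.continuous_deriv le_rfl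
  have hdχpc : Continuous (deriv χp) := hχp.continuous_deriv le_rfl
  have hfmc : Continuous fm := by
    apply Continuous.mul
    · exact Continuous.inner hχm.continuous
        ((hu.smul hχm.continuous).add (continuous_const.smul hdχmc))
    · exact Complex.continuous_ofReal.comp hρC1.continuous
  have hfpc : Continuous fp := by
    apply Continuous.mul
    · exact Continuous.inner hχp.continuous
        ((hu.smul hχp.continuous).add (continuous_const.smul hdχpc))
    · exact Complex.continuous_ofReal.comp hρC1.continuous
  have hfm0 : ∀ z, z < -K → fm z = 0 := by
    intro z hz; simp [hfm, hχm0 z hz]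
  have hfp0 : ∀ z, K < z → fp z = 0 := by
    intro z hz; simp [hfp, hχp0 z hz]
  -- the full integrand as a sum of indicators
  set F : ℝ → ℂ := fun z => (⟪χ z, u z • χ z
        + (Complex.I * (ℏ : ℂ)) • (if z < 0 then deriv χm z else deriv χp z)⟫_ℂ)
      * (ρ z : ℂ) with hF
  have hFsplit : F = fun z => (Iio (0:ℝ)).indicator fm z + (Ici (0:ℝ)).indicator fp z := by
    funext z
    by_cases hz : z < 0
    · rw [hF]
      simp [indicator_of_mem (mem_Iio.2 hz), indicator_of_notMem (by simp [hz.le]; exact hz : z ∉ Ici (0:ℝ)),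
        hχ z, if_pos hz, hfm]
    · rw [hF]
      simp [indicator_of_notMem (by simpa using hz : z ∉ Iio (0:ℝ)),
        indicator_of_mem (mem_Ici.2 (not_lt.1 hz)), hχ z, if_neg hz, hfp]
  -- integrability on the half lines
  have hIm : IntegrableOn fm (Iio (0:ℝ)) := by
    rw [← Iio_union_Ico_eq_Iio (by linarith : -K ≤ (0:ℝ))]
    apply IntegrableOn.union
    · exact (integrableOn_congr_fun (fun z hz => hfm0 z hz) measurableSet_Iio).2
        (integrableOn_zero)
    · exact (hfmc.integrableOn_Icc).mono_set Ico_subset_Icc_self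
  have hIp : IntegrableOn fp (Ici (0:ℝ)) := by
    rw [← Icc_union_Ioi_eq_Ici (by linarith : (0:ℝ) ≤ K)]
    apply IntegrableOn.union
    · exact hfpc.integrableOn_Icc
    · exact (integrableOn_congr_fun (fun z hz => hfp0 z hz) measurableSet_Ioi).2
        (integrableOn_zero)
  have hFint : Integrable F := by
    rw [hFsplit]
    exact ((integrable_indicator_iff measurableSet_Iio).2 hIm).add
      ((integrable_indicator_iff measurableSet_Ici).2 hIp)
  -- reduce to a real integral
  have him0 := integral_im (𝕜 := ℂ) hFint
  simp only [RCLike.im_to_complex] at him0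
  rw [show (∫ z : ℝ, (⟪χ z, u z • χ z
        + (Complex.I * (ℏ : ℂ)) • (if z < 0 then deriv χm z else deriv χp z)⟫_ℂ)
      * (ρ z : ℂ)) = ∫ z, F z from rfl, ← him0]
  -- the derivative functions
  set Dm : ℝ → ℝ := fun z => ℏ/2 * (2 * (⟪χm z, deriv χm z⟫_ℂ).re * ρ z + ‖χm z‖^2 * deriv ρ z) with hDm
  set Dp : ℝ → ℝ := fun z => ℏ/2 * (2 * (⟪χp z, deriv χp z⟫_ℂ).re * ρ z + ‖χp z‖^2 * deriv ρ z) with hDp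
  have him : ∀ z, (F z).im = if z < 0 then Dm z else Dp z := by
    intro z
    by_cases hz : z < 0
    · rw [hF, if_pos hz]
      simp only [hχ z, if_pos hz]
      rw [aux_im, hDm]
      linear_combination (-(‖χm z‖^2) / 2) * hlog z
    · rw [hF, if_neg hz]
      simp only [hχ z, if_neg hz]
      rw [aux_im, hDp]
      linear_combination (-(‖χp z‖^2) / 2) * hlog z
  have hDmc : Continuous Dm := by
    apply continuous_const.mul
    apply Continuous.add
    · exact (continuous_const.mul (Complex.continuous_re.comp
        (Continuous.inner hχm.continuous hdχmc))).mul hρC1.continuous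
    · exact ((hχm.continuous.norm).pow 2).mul (hρC1.continuous_deriv le_rfl)
  have hDpc : Continuous Dp := by
    apply continuous_const.mul
    apply Continuous.add
    · exact (continuous_const.mul (Complex.continuous_re.comp
        (Continuous.inner hχp.continuous hdχpc))).mul hρC1.continuous
    · exact ((hχp.continuous.norm).pow 2).mul (hρC1.continuous_deriv le_rfl)
  have hDm0 : ∀ z, z < -K → Dm z = 0 := by
    intro z hz; rw [hDm]; simp [hχm0 z hz, hdχm0 z hz]
  have hDp0 : ∀ z, K < z → Dp z = 0 := by
    intro z hz; rw [hDp]; simp [hχp0 z hz, hdχp0 z hz]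
  have hIDm : IntegrableOn Dm (Iio (0:ℝ)) := by
    rw [← Iio_union_Ico_eq_Iio (by linarith : -(K+1) ≤ (0:ℝ))]
    apply IntegrableOn.union
    · exact (integrableOn_congr_fun (fun z hz => hDm0 z ((by simpa using hz : z < -(K+1)).trans_le (by linarith))) measurableSet_Iio).2
        integrableOn_zero
    · exact (hDmc.integrableOn_Icc).mono_set Ico_subset_Icc_self
  have hIDp : IntegrableOn Dp (Ici (0:ℝ)) := by
    rw [← Icc_union_Ioi_eq_Ici (by linarith : (0:ℝ) ≤ K+1)]
    apply IntegrableOn.union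
    · exact hDpc.integrableOn_Icc
    · exact (integrableOn_congr_fun (fun z hz => hDp0 z (by linarith [mem_Ioi.1 hz])) measurableSet_Ioi).2
        integrableOn_zero
  have hgsplit : (fun z => (F z).im)
      = fun z => (Iio (0:ℝ)).indicator Dm z + (Ici (0:ℝ)).indicator Dp z := by
    funext z
    rw [him z]
    by_cases hz : z < 0
    · simp [indicator_of_mem (mem_Iio.2 hz),
        indicator_of_notMem (by simpa using not_le.2 hz : z ∉ Ici (0:ℝ)), if_pos hz]
    · simp [indicator_of_notMem (by simpa using hz : z ∉ Iio (0:ℝ)),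
        indicator_of_mem (mem_Ici.2 (not_lt.1 hz)), if_neg hz]
  rw [hgsplit, integral_add ((integrable_indicator_iff measurableSet_Iio).2 hIDm)
      ((integrable_indicator_iff measurableSet_Ici).2 hIDp),
    integral_indicator measurableSet_Iio, integral_indicator measurableSet_Ici]
  -- evaluate the two halves by FTC
  have hGm := aux_hasDerivAt ℏ ρ hρC1 χm hχm
  have hGp := aux_hasDerivAt ℏ ρ hρC1 χp hχp
  have hleft : ∫ z in Iio (0:ℝ), Dm z = ℏ/2 * (‖χm 0‖^2 * ρ 0) := by
    rw [← Iio_union_Ico_eq_Iio (by linarith : -(K+1) ≤ (0:ℝ)),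
      setIntegral_union ((Iio_disjoint_Ici le_rfl).mono le_rfl Ico_subset_Ici_self)
        measurableSet_Ico
        ((integrableOn_congr_fun (fun z hz => hDm0 z ((by simpa using hz : z < -(K+1)).trans_le (by linarith))) measurableSet_Iio).2 integrableOn_zero)
        ((hDmc.integrableOn_Icc).mono_set Ico_subset_Icc_self),
      setIntegral_congr_fun measurableSet_Iio
        (fun z hz => hDm0 z ((by simpa using hz : z < -(K+1)).trans_le (by linarith))),
      integral_zero, setIntegral_congr_set Ico_ae_eq_Ioc,
      ← intervalIntegral.integral_of_le (by linarith : -(K+1) ≤ (0:ℝ)),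
      intervalIntegral.integral_eq_sub_of_hasDerivAt (fun x _ => hGm x)
        (hDmc.intervalIntegrable _ _)]
    have : χm (-(K+1)) = 0 := hχm0 _ (by linarith)
    rw [this]
    simp
  have hright : ∫ z in Ici (0:ℝ), Dp z = -(ℏ/2 * (‖χp 0‖^2 * ρ 0)) := by
    rw [← Icc_union_Ioi_eq_Ici (by linarith : (0:ℝ) ≤ K+1),
      setIntegral_union (Iic_disjoint_Ioi le_rfl |>.mono Icc_subset_Iic_self le_rfl)
        measurableSet_Ioi hDpc.integrableOn_Icc
        ((integrableOn_congr_fun (fun z hz => hDp0 z (by linarith [mem_Ioi.1 hz])) measurableSet_Ioi).2 integrableOn_zero),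
      setIntegral_congr_fun measurableSet_Ioi
        (fun z hz => hDp0 z (by linarith [mem_Ioi.1 hz])),
      integral_zero, setIntegral_congr_set Ioc_ae_eq_Icc.symm,
      ← intervalIntegral.integral_of_le (by linarith : (0:ℝ) ≤ K+1),
      intervalIntegral.integral_eq_sub_of_hasDerivAt (fun x _ => hGp x)
        (hDpc.intervalIntegrable _ _)]
    have : χp (K+1) = 0 := hχp0 _ (by linarith)
    rw [this]
    simp
  rw [hleft, hright, hbd]
  ring
end

section
/- Let 𝓗 be a complex Hilbert space, H a bounded self-adjoint operator on 𝓗, S a unitary operator on 𝓗, ℏ > 0, u : ℝ → ℂ continuous, and set ũ(z) := u(−z) and S(z) := exp((i/ℏ)zH) ∘ S ∘ exp(−(i/ℏ)zH). Given functions ψ⁰, ψ̃⁰ : ℝ → 𝓗, define for t ∈ ℝ the input and output waves ψᵗ(z) := exp(−(i/ℏ)∫_0^t u(z+r)dr) · exp(−(i/ℏ)tH) · ψ⁰(z+t) and ψ̃ᵗ(z) := exp(−(i/ℏ)∫_0^t ũ(z−r)dr) · exp(−(i/ℏ)tH) · ψ̃⁰(z−t). If the reflection connection ψ̃⁰(−z)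 = S(z) ψ⁰(z) holds for all z ∈ ℝ, then it is preserved for all times: ψ̃ᵗ(−z) = S(z) ψᵗ(z) for all z ∈ ℝ and all t ∈ ℝ. -/
private lemma exp_smul_mul_exp_smul {𝓗 : Type*} [NormedAddCommGroup 𝓗]
    [InnerProductSpace ℂ 𝓗] [CompleteSpace 𝓗] (H : 𝓗 →L[ℂ] 𝓗) (a b : ℂ) :
    NormedSpace.exp (a • H) * NormedSpace.exp (b • H)
      = NormedSpace.exp ((a + b) • H) := by
  let +nondep : NormedAlgebra ℚ (𝓗 →L[ℂ] 𝓗) := .restrictScalars ℚ ℂ _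
  rw [add_smul, NormedSpace.exp_add_of_commute]
  exact ((Commute.refl H).smul_left a).smul_right b


/-- **Preservation of the reflection connection**: for the freely propagating input
and output waves
`ψᵗ(z) = e^{−(i/ℏ)∫_0^t u(z+r)dr} e^{−(i/ℏ)tH} ψ⁰(z+t)`,
`ψ̃ᵗ(z) = e^{−(i/ℏ)∫_0^t ũ(z−r)dr} e^{−(i/ℏ)tH} ψ̃⁰(z−t)` (with `ũ(z) = u(−z)`),
if the unitary reflection connection `ψ̃⁰(−z) = S(z)ψ⁰(z)` holds at `t = 0`, where
`S(z) = e^{(i/ℏ)zH} S e^{−(i/ℏ)zH}`, then `ψ̃ᵗ(−z) = S(z)ψᵗ(z)` for all `t, z ∈ ℝ`. -/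
theorem reflection_connection_preserved {𝓗 : Type*} [NormedAddCommGroup 𝓗]
    [InnerProductSpace ℂ 𝓗] [CompleteSpace 𝓗]
    (H : 𝓗 →L[ℂ] 𝓗) (hH : IsSelfAdjoint H)
    (S : 𝓗 →L[ℂ] 𝓗) (hS : S ∈ unitary (𝓗 →L[ℂ] 𝓗))
    (ℏ : ℝ) (hℏ : 0 < ℏ)
    (u : ℝ → ℂ) (hu : Continuous u)
    (ut : ℝ → ℂ) (hut : ∀ z, ut z = u (-z))
    (Sz : ℝ → (𝓗 →L[ℂ] 𝓗))
    (hSz : ∀ z : ℝ, Sz z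
      = (NormedSpace.exp (((Complex.I / (ℏ : ℂ)) * (z : ℂ)) • H)).comp
          (S.comp (NormedSpace.exp ((-((Complex.I / (ℏ : ℂ)) * (z : ℂ))) • H))))
    (ψ0 ψt0 : ℝ → 𝓗)
    (ψ ψt : ℝ → ℝ → 𝓗)
    (hψ : ∀ t z : ℝ, ψ t z
      = Complex.exp (-((Complex.I / (ℏ : ℂ)) * ∫ r in (0:ℝ)..t, u (z + r))) •
          (NormedSpace.exp ((-((Complex.I / (ℏ : ℂ)) * (t : ℂ))) • H)) (ψ0 (z + t)))
    (hψt : ∀ t z : ℝ, ψt t z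
      = Complex.exp (-((Complex.I / (ℏ : ℂ)) * ∫ r in (0:ℝ)..t, ut (z - r))) •
          (NormedSpace.exp ((-((Complex.I / (ℏ : ℂ)) * (t : ℂ))) • H)) (ψt0 (z - t)))
    (hconn0 : ∀ z : ℝ, ψt0 (-z) = (Sz z) (ψ0 z)) :
    ∀ t z : ℝ, ψt t (-z) = (Sz z) (ψ t z) := by
  intro t z
  set c : ℂ := Complex.I / (ℏ : ℂ) with hc
  have hint : (∫ r in (0:ℝ)..t, ut (-z - r)) = ∫ r in (0:ℝ)..t, u (z + r) := by
    apply intervalIntegral.integral_congr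
    intro r _
    show ut (-z - r) = u (z + r)
    rw [hut, show -(-z - r) = z + r by ring]
  have hop : (NormedSpace.exp ((-(c * (t : ℂ))) • H)) ∘L Sz (z + t)
      = Sz z ∘L (NormedSpace.exp ((-(c * (t : ℂ))) • H)) := by
    rw [hSz, hSz]
    simp only [← ContinuousLinearMap.mul_def, ← mul_assoc, ← hc]
    rw [exp_smul_mul_exp_smul, mul_assoc, mul_assoc, exp_smul_mul_exp_smul,
      ← mul_assoc]
    push_cast
    ring_nf
  have hop' := fun v => congrFun (congrArg (fun (A : 𝓗 →L[ℂ] 𝓗) => (A : 𝓗 → 𝓗)) hop) v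
  simp only [ContinuousLinearMap.coe_comp', Function.comp_apply] at hop'
  rw [hψt, hψ, show (-z : ℝ) - t = -(z + t) by ring, hconn0 (z + t), hint,
    map_smul, hop' (ψ0 (z + t))]
end
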